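/- arXiv:1401.0803 — 9 statements merged into one kernel-verified Lean document; each statement's English description precedes it below -/
import Mathlib

section
/- Let φ be the structure function of a semicoherent system on n components. Then a subset A ⊆ [n] is a minimal path set of the system if and only if A is a minimal element (with respect to set inclusion) of the family {B ⊆ [n] : d(B) ≠ 0}; moreover, every minimal path set A satisfies d(A) = 1. -/
open Finset

/-- The coefficients of the simple (multilinear) form of the structure function:
`d(A) = ∑_{B ⊆ A} (−1)^{|A|−|B|} φ(B)`. -/
def dCoef {n : ℕ} (φ : Finset (Fin n) → ℚ) (A : Finset (Fin n)) : ℚ :=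
  ∑ B ∈ A.powerset, (-1 : ℚ) ^ (A.card - B.card) * φ B

lemma alt_sum_aux {n : ℕ} (A C : Finset (Fin n)) (hCA : C ⊆ A) :
    ∑ B ∈ A.powerset.filter (fun B => C ⊆ B), (-1 : ℚ) ^ (B.card - C.card)
      = if C = A then 1 else 0 := by
  have himg : A.powerset.filter (fun B => C ⊆ B) = (A \ C).powerset.image (· ∪ C) := by
    ext B
    simp only [mem_filter, mem_powerset, mem_image]
    constructor
    · rintro ⟨hBA, hCB⟩
      exact ⟨B \ C, sdiff_subset_sdiff hBA (subset_refl C), by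
        rw [sdiff_union_self_eq_union, union_eq_left.mpr hCB]⟩
    · rintro ⟨D, hD, rfl⟩
      exact ⟨union_subset ((subset_sdiff.mp hD).1) hCA, subset_union_right⟩
  have hinj : ∀ D ∈ (A \ C).powerset, ∀ D' ∈ (A \ C).powerset,
      D ∪ C = D' ∪ C → D = D' := by
    intro D hD D' hD' h
    have h1 : Disjoint D C := (subset_sdiff.mp (mem_powerset.mp hD)).2
    have h2 : Disjoint D' C := (subset_sdiff.mp (mem_powerset.mp hD')).2
    have := congrArg (· \ C) h
    simpa [union_sdiff_right, sdiff_eq_self_of_disjoint h1,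
      sdiff_eq_self_of_disjoint h2] using this
  rw [himg, Finset.sum_image hinj]
  have hcongr : ∀ D ∈ (A \ C).powerset,
      (-1 : ℚ) ^ ((D ∪ C).card - C.card) = (-1 : ℚ) ^ D.card := by
    intro D hD
    have h1 : Disjoint D C := (subset_sdiff.mp (mem_powerset.mp hD)).2
    rw [card_union_of_disjoint h1, Nat.add_sub_cancel]
  rw [Finset.sum_congr rfl hcongr]
  have hq : ∑ m ∈ (A \ C).powerset, (-1 : ℚ) ^ m.card
      = if A \ C = ∅ then 1 else 0 := by
    have h := congrArg (fun z : ℤ => (z : ℚ))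
      (Finset.sum_powerset_neg_one_pow_card (x := A \ C))
    push_cast at h
    simpa using h
  have hiff : (A \ C = ∅) ↔ (C = A) := by
    rw [sdiff_eq_empty_iff_subset]
    exact ⟨fun h => subset_antisymm hCA h, fun h => h ▸ subset_refl A⟩
  rw [hq, if_congr hiff rfl rfl]

lemma dCoef_inv {n : ℕ} (φ : Finset (Fin n) → ℚ) (A : Finset (Fin n)) :
    ∑ B ∈ A.powerset, dCoef φ B = φ A := by
  unfold dCoef
  rw [Finset.sum_comm' (t' := A.powerset)
    (s' := fun C => A.powerset.filter (fun B => C ⊆ B))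
    (fun B C => by
      simp only [mem_powerset, mem_filter]
      constructor
      · rintro ⟨hBA, hCB⟩; exact ⟨⟨hBA, hCB⟩, hCB.trans hBA⟩
      · rintro ⟨⟨hBA, hCB⟩, _⟩; exact ⟨hBA, hCB⟩)]
  have : ∀ C ∈ A.powerset,
      ∑ B ∈ A.powerset.filter (fun B => C ⊆ B), (-1 : ℚ) ^ (B.card - C.card) * φ C
        = (if C = A then 1 else 0) * φ C := by
    intro C hC
    rw [← Finset.sum_mul, alt_sum_aux A C (mem_powerset.mp hC)]
  rw [Finset.sum_congr rfl this]
  simp [Finset.sum_ite_eq' A.powerset A (fun C => φ C)]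

/-- `A` is a minimal path set of a semicoherent system `φ` iff `A` is a
minimal element (w.r.t. inclusion) of the family `{B : d(B) ≠ 0}`; moreover, every minimal
path set `A` satisfies `d(A) = 1`. -/
theorem min_path_sets_eq_minimal_monomials
    (n : ℕ) (hn : 1 ≤ n)
    (φ : Finset (Fin n) → ℚ)
    (h01 : ∀ A, φ A = 0 ∨ φ A = 1)
    (hmono : ∀ A B : Finset (Fin n), A ⊆ B → φ A ≤ φ B)
    (hempty : φ ∅ = 0) (hfull : φ Finset.univ = 1) :
    ∀ A : Finset (Fin n),
      ((φ A = 1 ∧ ∀ A' ⊂ A, φ A' = 0)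
        ↔ (dCoef φ A ≠ 0 ∧ ∀ B ⊂ A, dCoef φ B = 0)) ∧
      ((φ A = 1 ∧ ∀ A' ⊂ A, φ A' = 0) → dCoef φ A = 1) := by
  intro A
  have fwd : (φ A = 1 ∧ ∀ A' ⊂ A, φ A' = 0) → dCoef φ A = 1 := by
    rintro ⟨hA1, hmin⟩
    unfold dCoef
    rw [Finset.sum_eq_single A]
    · simp [hA1]
    · intro B hB hBA
      rw [hmin B (ssubset_of_subset_of_ne (mem_powerset.mp hB) hBA), mul_zero]
    · intro h; exact absurd (mem_powerset_self A) h
  have fwd0 : (φ A = 1 ∧ ∀ A' ⊂ A, φ A' = 0) → ∀ B ⊂ A, dCoef φ B = 0 := by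
    rintro ⟨hA1, hmin⟩ B hBA
    unfold dCoef
    apply Finset.sum_eq_zero
    intro C hC
    rw [hmin C (lt_of_le_of_lt (mem_powerset.mp hC) hBA), mul_zero]
  constructor
  · constructor
    · intro h
      exact ⟨by rw [fwd h]; norm_num, fwd0 h⟩
    · rintro ⟨hd, hmin⟩
      have hzero : ∀ A' ⊂ A, φ A' = 0 := by
        intro A' hA'
        rw [← dCoef_inv φ A']
        apply Finset.sum_eq_zero
        intro B hB
        exact hmin B (lt_of_le_of_lt (mem_powerset.mp hB) hA')
      have hφA : φ A = dCoef φ A := by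
        rw [← dCoef_inv φ A, Finset.sum_eq_single A]
        · intro B hB hBA
          exact hmin B (ssubset_of_subset_of_ne (mem_powerset.mp hB) hBA)
        · intro h; exact absurd (mem_powerset_self A) h
      refine ⟨?_, hzero⟩
      rcases h01 A with h0 | h1
      · exact absurd (h0 ▸ hφA.symm) hd
      · exact h1
  · exact fwd
end

section
/- Let φ be the structure function of a semicoherent system on n components with minimal path sets P₁,…,P_r. Then for every A ⊆ [n], d(A) = ∑_{∅ ≠ B ⊆ {1,…,r}, ⋃_{j∈B} P_j = A} (−1)^{|B|−1}. In particular, d(A) equals the number of odd formations of A minus the number of even formations of A, where a formation of A is a nonempty set B of indices of minimal path sets whose union equals A, called odd (resp. even) if |B| is odd (resp. even). -/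
open Finset

lemma neg_one_pow_sub_q {a b : ℕ} (h : b ≤ a) :
    (-1 : ℚ) ^ (a - b) = (-1) ^ a * (-1) ^ b := by
  have h2 : ((-1 : ℚ) ^ b) * ((-1) ^ b) = 1 := by
    rw [← pow_add]
    exact Even.neg_one_pow ⟨b, rfl⟩
  have h3 : (-1 : ℚ) ^ a = (-1) ^ (a - b) * (-1) ^ b := by
    rw [← pow_add, Nat.sub_add_cancel h]
  rw [h3, mul_assoc, h2, mul_one]

lemma sum_neg_one_pow_card_q {α : Type*} [DecidableEq α] (x : Finset α) :
    (∑ m ∈ x.powerset, (-1 : ℚ) ^ m.card) = if x = ∅ then 1 else 0 := by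
  have := Finset.sum_powerset_neg_one_pow_card (x := x)
  have h : ((∑ m ∈ x.powerset, (-1 : ℤ) ^ m.card : ℤ) : ℚ)
      = ∑ m ∈ x.powerset, (-1 : ℚ) ^ m.card := by push_cast; ring_nf
  rw [← h, this]
  split <;> simp

/-- alternating sum over the interval `[U, A]`. -/
lemma interval_alt_sum {n : ℕ} (U A : Finset (Fin n)) :
    (∑ C ∈ A.powerset.filter (fun C => U ⊆ C), (-1 : ℚ) ^ (A.card - C.card))
      = if U = A then 1 else 0 := by
  by_cases hUA : U ⊆ A
  · have key : (∑ C ∈ A.powerset.filter (fun C => U ⊆ C), (-1 : ℚ) ^ (A.card - C.card))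
        = ∑ D ∈ (A \ U).powerset, (-1 : ℚ) ^ ((A \ U).card - D.card) := by
      refine Finset.sum_bij' (fun C _ => C \ U) (fun D _ => D ∪ U) ?_ ?_ ?_ ?_ ?_
      · intro C hC
        simp only [mem_filter, mem_powerset] at hC ⊢
        exact sdiff_subset_sdiff hC.1 (Finset.Subset.refl U)
      · intro D hD
        simp only [mem_powerset] at hD
        simp only [mem_filter, mem_powerset]
        exact ⟨Finset.union_subset (hD.trans Finset.sdiff_subset) hUA,
          Finset.subset_union_right⟩
      · intro C hC
        simp only [mem_filter, mem_powerset] at hC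
        exact Finset.sdiff_union_of_subset hC.2
      · intro D hD
        simp only [mem_powerset] at hD
        have : Disjoint D U := Finset.disjoint_of_subset_left hD Finset.sdiff_disjoint
        exact Finset.union_sdiff_cancel_right this
      · intro C hC
        simp only [mem_filter, mem_powerset] at hC
        show (-1 : ℚ) ^ (A.card - C.card) = (-1 : ℚ) ^ ((A \ U).card - (C \ U).card)
        have h1 : (C \ U).card = C.card - U.card := Finset.card_sdiff_of_subset hC.2
        have h2 : (A \ U).card = A.card - U.card := Finset.card_sdiff_of_subset hUA
        have hcu : U.card ≤ C.card := Finset.card_le_card hC.2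
        have hca : C.card ≤ A.card := Finset.card_le_card hC.1
        congr 1
        omega
    rw [key]
    have step : ∀ D ∈ (A \ U).powerset, (-1 : ℚ) ^ ((A \ U).card - D.card)
        = (-1 : ℚ) ^ (A \ U).card * (-1 : ℚ) ^ D.card := fun D hD =>
      neg_one_pow_sub_q (Finset.card_le_card (Finset.mem_powerset.mp hD))
    rw [Finset.sum_congr rfl step, ← Finset.mul_sum, sum_neg_one_pow_card_q]
    by_cases hAU : A \ U = ∅
    · have : U = A := Finset.Subset.antisymm hUA
        (Finset.sdiff_eq_empty_iff_subset.mp hAU)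
      simp [hAU, this]
    · have : U ≠ A := fun h => hAU (by simp [h])
      simp [hAU, this]
  · have hempty : A.powerset.filter (fun C => U ⊆ C) = ∅ := by
      rw [Finset.filter_eq_empty_iff]
      intro C hC hUC
      exact hUA (hUC.trans (Finset.mem_powerset.mp hC))
    have : U ≠ A := fun h => hUA (h ▸ Finset.Subset.refl A)
    simp [hempty, this]

section Main

variable {n r : ℕ} (φ : Finset (Fin n) → ℚ) (P : Fin r → Finset (Fin n))

lemma exists_path_subset
    (h01 : ∀ A, φ A = 0 ∨ φ A = 1)
    (hP : ∀ A : Finset (Fin n),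
      (∃ j, P j = A) ↔ (φ A = 1 ∧ ∀ A' ⊂ A, φ A' = 0)) :
    ∀ A : Finset (Fin n), φ A = 1 → ∃ j, P j ⊆ A := by
  intro A
  induction A using Finset.strongInduction with
  | _ A ih =>
    intro hA
    by_cases hmin : ∀ A' ⊂ A, φ A' = 0
    · obtain ⟨j, hj⟩ := (hP A).mpr ⟨hA, hmin⟩
      exact ⟨j, hj ▸ Finset.Subset.refl A⟩
    · push_neg at hmin
      obtain ⟨A', hA'ss, hA'ne⟩ := hmin
      have hA'1 : φ A' = 1 := (h01 A').resolve_left hA'ne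
      obtain ⟨j, hj⟩ := ih A' hA'ss hA'1
      exact ⟨j, hj.trans hA'ss.subset⟩

lemma phi_eq_one_iff
    (h01 : ∀ A, φ A = 0 ∨ φ A = 1)
    (hmono : ∀ A B : Finset (Fin n), A ⊆ B → φ A ≤ φ B)
    (hP : ∀ A : Finset (Fin n),
      (∃ j, P j = A) ↔ (φ A = 1 ∧ ∀ A' ⊂ A, φ A' = 0)) :
    ∀ A : Finset (Fin n), φ A = 1 ↔ ∃ j, P j ⊆ A := by
  intro A
  constructor
  · exact exists_path_subset φ P h01 hP A
  · rintro ⟨j, hj⟩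
    have h1 : φ (P j) = 1 := ((hP (P j)).mp ⟨j, rfl⟩).1
    have := hmono (P j) A hj
    rcases h01 A with h | h
    · rw [h1, h] at this; linarith
    · exact h

lemma phi_formula
    (h01 : ∀ A, φ A = 0 ∨ φ A = 1)
    (hmono : ∀ A B : Finset (Fin n), A ⊆ B → φ A ≤ φ B)
    (hP : ∀ A : Finset (Fin n),
      (∃ j, P j = A) ↔ (φ A = 1 ∧ ∀ A' ⊂ A, φ A' = 0)) :
    ∀ C : Finset (Fin n),
      φ C = ∑ B ∈ (Finset.univ : Finset (Fin r)).powerset.filter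
          (fun B => B.Nonempty ∧ B.biUnion P ⊆ C), (-1 : ℚ) ^ (B.card - 1) := by
  intro C
  classical
  set S : Finset (Fin r) := Finset.univ.filter (fun j => P j ⊆ C) with hS
  have hfeq : (Finset.univ : Finset (Fin r)).powerset.filter
      (fun B => B.Nonempty ∧ B.biUnion P ⊆ C) = S.powerset.filter (fun B => B.Nonempty) := by
    ext B
    simp only [mem_filter, mem_powerset, Finset.biUnion_subset]
    constructor
    · rintro ⟨-, hne, hsub⟩
      refine ⟨fun j hj => ?_, hne⟩
      simp only [hS, Finset.mem_filter, Finset.mem_univ, true_and]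
      exact hsub j hj
    · rintro ⟨hsub, hne⟩
      refine ⟨Finset.subset_univ B, hne, fun j hj => ?_⟩
      have := hsub hj
      simpa [hS] using this
  rw [hfeq]
  -- split the powerset sum over S
  have hsplit := Finset.sum_filter_add_sum_filter_not S.powerset
    (fun B => B.Nonempty) (fun B => (-1 : ℚ) ^ B.card)
  have hnotne : S.powerset.filter (fun B => ¬ B.Nonempty) = {∅} := by
    ext B
    simp only [Finset.mem_filter, Finset.mem_powerset, Finset.not_nonempty_iff_eq_empty,
      Finset.mem_singleton]
    constructor
    · rintro ⟨-, h⟩; exact h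
    · rintro rfl; exact ⟨Finset.empty_subset S, rfl⟩
  have hterm : ∀ B ∈ S.powerset.filter (fun B => B.Nonempty),
      (-1 : ℚ) ^ B.card = -((-1 : ℚ) ^ (B.card - 1)) := by
    intro B hB
    have hne : B.Nonempty := (Finset.mem_filter.mp hB).2
    have hc : 1 ≤ B.card := Finset.card_pos.mpr hne
    have : B.card = (B.card - 1) + 1 := by omega
    conv_lhs => rw [this]
    rw [pow_succ]
    ring
  have hsum1 : ∑ B ∈ S.powerset.filter (fun B => B.Nonempty), (-1 : ℚ) ^ B.card
      = -(∑ B ∈ S.powerset.filter (fun B => B.Nonempty), (-1 : ℚ) ^ (B.card - 1)) := by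
    rw [Finset.sum_congr rfl hterm, Finset.sum_neg_distrib]
  rw [hsum1, hnotne] at hsplit
  simp only [Finset.sum_singleton, Finset.card_empty, pow_zero] at hsplit
  rw [sum_neg_one_pow_card_q] at hsplit
  have hphi : φ C = if S = ∅ then 0 else 1 := by
    by_cases hSe : S = ∅
    · simp only [hSe, if_true]
      rcases h01 C with h | h
      · exact h
      · obtain ⟨j, hj⟩ := (phi_eq_one_iff φ P h01 hmono hP C).mp h
        have : j ∈ S := by simp [hS, hj]
        rw [hSe] at this
        exact absurd this (Finset.notMem_empty j)
    · simp only [hSe, if_false]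
      obtain ⟨j, hj⟩ := Finset.nonempty_iff_ne_empty.mpr hSe
      have : P j ⊆ C := by simpa [hS] using hj
      exact (phi_eq_one_iff φ P h01 hmono hP C).mpr ⟨j, this⟩
  rw [hphi]
  by_cases hSe : S = ∅ <;> simp [hSe] at hsplit ⊢ <;> linarith

end Main

/-- If `P₁,…,P_r` are the minimal path sets of a semicoherent system `φ`,
then `d(A) = ∑_{∅ ≠ B ⊆ [r], ⋃_{j∈B} P_j = A} (−1)^{|B|−1}`; in particular `d(A)` is the
number of odd formations of `A` minus the number of even formations of `A`. -/
theorem dCoef_eq_odd_sub_even_formations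
    (n r : ℕ) (hn : 1 ≤ n)
    (φ : Finset (Fin n) → ℚ)
    (h01 : ∀ A, φ A = 0 ∨ φ A = 1)
    (hmono : ∀ A B : Finset (Fin n), A ⊆ B → φ A ≤ φ B)
    (hempty : φ ∅ = 0) (hfull : φ Finset.univ = 1)
    (P : Fin r → Finset (Fin n)) (hPinj : Function.Injective P)
    (hP : ∀ A : Finset (Fin n),
      (∃ j, P j = A) ↔ (φ A = 1 ∧ ∀ A' ⊂ A, φ A' = 0)) :
    ∀ A : Finset (Fin n),
      (dCoef φ A
        = ∑ B ∈ (Finset.univ : Finset (Fin r)).powerset.filter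
            (fun B => B.Nonempty ∧ B.biUnion P = A),
            (-1 : ℚ) ^ (B.card - 1)) ∧
      dCoef φ A
        = (((Finset.univ : Finset (Fin r)).powerset.filter
              (fun B => B.Nonempty ∧ B.biUnion P = A ∧ Odd B.card)).card : ℚ)
          - (((Finset.univ : Finset (Fin r)).powerset.filter
              (fun B => B.Nonempty ∧ B.biUnion P = A ∧ Even B.card)).card : ℚ) := by
  intro A
  classical
  have main : dCoef φ A
      = ∑ B ∈ (Finset.univ : Finset (Fin r)).powerset.filter
          (fun B => B.Nonempty ∧ B.biUnion P = A), (-1 : ℚ) ^ (B.card - 1) := by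
    unfold dCoef
    calc ∑ C ∈ A.powerset, (-1 : ℚ) ^ (A.card - C.card) * φ C
        = ∑ C ∈ A.powerset, ∑ B ∈ (Finset.univ : Finset (Fin r)).powerset,
            (if B.Nonempty ∧ B.biUnion P ⊆ C
              then (-1 : ℚ) ^ (A.card - C.card) * (-1 : ℚ) ^ (B.card - 1) else 0) := by
          refine Finset.sum_congr rfl fun C _ => ?_
          rw [phi_formula φ P h01 hmono hP C, Finset.mul_sum, ← Finset.sum_filter]
      _ = ∑ B ∈ (Finset.univ : Finset (Fin r)).powerset, ∑ C ∈ A.powerset,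
            (if B.Nonempty ∧ B.biUnion P ⊆ C
              then (-1 : ℚ) ^ (A.card - C.card) * (-1 : ℚ) ^ (B.card - 1) else 0) :=
          Finset.sum_comm
      _ = ∑ B ∈ (Finset.univ : Finset (Fin r)).powerset,
            (if B.Nonempty ∧ B.biUnion P = A then (-1 : ℚ) ^ (B.card - 1) else 0) := by
          refine Finset.sum_congr rfl fun B _ => ?_
          by_cases hBne : B.Nonempty
          · calc ∑ C ∈ A.powerset,
                  (if B.Nonempty ∧ B.biUnion P ⊆ C
                    then (-1 : ℚ) ^ (A.card - C.card) * (-1 : ℚ) ^ (B.card - 1) else 0)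
                = ∑ C ∈ A.powerset.filter (fun C => B.biUnion P ⊆ C),
                    (-1 : ℚ) ^ (A.card - C.card) * (-1 : ℚ) ^ (B.card - 1) := by
                  rw [Finset.sum_filter]
                  exact Finset.sum_congr rfl fun C _ => by simp [hBne]
              _ = (∑ C ∈ A.powerset.filter (fun C => B.biUnion P ⊆ C),
                    (-1 : ℚ) ^ (A.card - C.card)) * (-1 : ℚ) ^ (B.card - 1) := by
                  rw [Finset.sum_mul]
              _ = (if B.biUnion P = A then 1 else 0) * (-1 : ℚ) ^ (B.card - 1) := by
                  rw [interval_alt_sum]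
              _ = (if B.Nonempty ∧ B.biUnion P = A
                    then (-1 : ℚ) ^ (B.card - 1) else 0) := by
                  by_cases h : B.biUnion P = A <;> simp [h, hBne]
          · simp [hBne]
      _ = ∑ B ∈ (Finset.univ : Finset (Fin r)).powerset.filter
            (fun B => B.Nonempty ∧ B.biUnion P = A), (-1 : ℚ) ^ (B.card - 1) :=
          (Finset.sum_filter _ _).symm
  refine ⟨main, ?_⟩
  rw [main]
  set F := (Finset.univ : Finset (Fin r)).powerset.filter
      (fun B => B.Nonempty ∧ B.biUnion P = A) with hF
  have hOdd : (Finset.univ : Finset (Fin r)).powerset.filter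
      (fun B => B.Nonempty ∧ B.biUnion P = A ∧ Odd B.card)
      = F.filter (fun B => Odd B.card) := by
    rw [hF, Finset.filter_filter]
    exact Finset.filter_congr fun B _ => by tauto
  have hEven : (Finset.univ : Finset (Fin r)).powerset.filter
      (fun B => B.Nonempty ∧ B.biUnion P = A ∧ Even B.card)
      = F.filter (fun B => ¬ Odd B.card) := by
    rw [hF, Finset.filter_filter]
    refine Finset.filter_congr fun B _ => ?_
    simp only [Nat.not_odd_iff_even]
    tauto
  rw [hOdd, hEven]
  have hsplit := Finset.sum_filter_add_sum_filter_not F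
      (fun B => Odd B.card) (fun B => (-1 : ℚ) ^ (B.card - 1))
  have h1 : ∑ B ∈ F.filter (fun B => Odd B.card), (-1 : ℚ) ^ (B.card - 1)
      = ((F.filter (fun B => Odd B.card)).card : ℚ) := by
    rw [Finset.sum_congr rfl (fun B hB => ?_), Finset.sum_const, nsmul_eq_mul, mul_one]
    obtain ⟨k, hk⟩ := (Finset.mem_filter.mp hB).2
    exact Even.neg_one_pow ⟨k, by omega⟩
  have h2 : ∑ B ∈ F.filter (fun B => ¬ Odd B.card), (-1 : ℚ) ^ (B.card - 1)
      = -((F.filter (fun B => ¬ Odd B.card)).card : ℚ) := by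
    rw [Finset.sum_congr rfl (fun B hB => ?_)]
    · rw [Finset.sum_const, nsmul_eq_mul, mul_neg_one]
    have hB' := Finset.mem_filter.mp hB
    have hne : B.Nonempty := (Finset.mem_filter.mp (hF ▸ hB'.1)).2.1
    have hc : 1 ≤ B.card := Finset.card_pos.mpr hne
    obtain ⟨k, hk⟩ := Nat.not_odd_iff_even.mp hB'.2
    exact Odd.neg_one_pow ⟨k - 1, by omega⟩
  rw [← hsplit, h1, h2]
  ring
end

section
/- Let φ be the structure function of a semicoherent system on n components. Then a subset A ⊆ [n] is a minimal cut set of the system if and only if A is a minimal element (with respect to set inclusion) of the family {B ⊆ [n] : d^D(B) ≠ 0}; moreover, every minimal cut set A satisfies d^D(A) = 1. -/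
open Finset

/-- The dual structure function `φᴰ(A) = 1 − φ([n]∖A)`. -/
def dualFun {n : ℕ} (φ : Finset (Fin n) → ℚ) (A : Finset (Fin n)) : ℚ :=
  1 - φ Aᶜ

lemma neg_one_pow_sum_q {n : ℕ} (x : Finset (Fin n)) :
    (∑ m ∈ x.powerset, (-1 : ℚ) ^ m.card) = if x = ∅ then 1 else 0 := by
  have h := @Finset.sum_powerset_neg_one_pow_card (Fin n) _ x
  have : ((∑ m ∈ x.powerset, (-1 : ℤ) ^ m.card : ℤ) : ℚ)
      = ∑ m ∈ x.powerset, (-1 : ℚ) ^ m.card := by push_cast; rfl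
  rw [← this, h]
  split_ifs <;> simp

lemma mobius {n : ℕ} (ψ : Finset (Fin n) → ℚ) (A : Finset (Fin n)) :
    ∑ B ∈ A.powerset, dCoef ψ B = ψ A := by
  unfold dCoef
  rw [Finset.sum_comm' (s := A.powerset) (t := fun B => B.powerset)
    (t' := A.powerset) (s' := fun C => A.powerset.filter (fun B => C ⊆ B))
    (by
      intro B C
      simp only [Finset.mem_powerset, Finset.mem_filter]
      constructor
      · rintro ⟨hBA, hCB⟩; exact ⟨⟨hBA, hCB⟩, hCB.trans hBA⟩
      · rintro ⟨⟨hBA, hCB⟩, _⟩; exact ⟨hBA, hCB⟩)]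
  have key : ∀ C ∈ A.powerset,
      (∑ B ∈ A.powerset.filter (fun B => C ⊆ B), (-1 : ℚ) ^ (B.card - C.card) * ψ C)
        = (if A \ C = ∅ then 1 else 0) * ψ C := by
    intro C hC
    rw [Finset.mem_powerset] at hC
    rw [← Finset.sum_mul, ← neg_one_pow_sum_q (A \ C)]
    congr 1
    apply Finset.sum_nbij' (i := fun B => B \ C) (j := fun D => C ∪ D)
    · intro B hB
      rw [Finset.mem_filter, Finset.mem_powerset] at hB
      rw [Finset.mem_powerset]
      exact Finset.sdiff_subset_sdiff hB.1 le_rfl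
    · intro D hD
      rw [Finset.mem_powerset] at hD
      rw [Finset.mem_filter, Finset.mem_powerset]
      refine ⟨Finset.union_subset hC (hD.trans Finset.sdiff_subset), Finset.subset_union_left⟩
    · intro B hB
      rw [Finset.mem_filter] at hB
      exact Finset.union_sdiff_of_subset hB.2
    · intro D hD
      rw [Finset.mem_powerset] at hD
      have hdisj : Disjoint C D := (Finset.sdiff_disjoint.mono_left hD).symm
      rw [Finset.union_sdiff_cancel_left hdisj]
    · intro B hB
      rw [Finset.mem_filter] at hB
      rw [Finset.card_sdiff_of_subset hB.2]
  rw [Finset.sum_congr rfl key]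
  rw [Finset.sum_eq_single A]
  · simp
  · intro C hC hne
    rw [Finset.mem_powerset] at hC
    have : A \ C ≠ ∅ := by
      intro h
      exact hne (le_antisymm hC (Finset.sdiff_eq_empty_iff_subset.mp h))
    simp [this]
  · intro h; exact absurd (Finset.mem_powerset_self A) h

/-- `A` is a minimal cut set of a semicoherent system `φ` iff `A` is a
minimal element (w.r.t. inclusion) of the family `{B : dᴰ(B) ≠ 0}`, where `dᴰ` are the
coefficients of the simple form of the dual structure function; moreover, every minimal cut
set `A` satisfies `dᴰ(A) = 1`. -/
theorem min_cut_sets_eq_minimal_dual_monomials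
    (n : ℕ) (hn : 1 ≤ n)
    (φ : Finset (Fin n) → ℚ)
    (h01 : ∀ A, φ A = 0 ∨ φ A = 1)
    (hmono : ∀ A B : Finset (Fin n), A ⊆ B → φ A ≤ φ B)
    (hempty : φ ∅ = 0) (hfull : φ Finset.univ = 1) :
    ∀ A : Finset (Fin n),
      ((φ Aᶜ = 0 ∧ ∀ A' ⊂ A, φ A'ᶜ = 1)
        ↔ (dCoef (dualFun φ) A ≠ 0 ∧ ∀ B ⊂ A, dCoef (dualFun φ) B = 0)) ∧
      ((φ Aᶜ = 0 ∧ ∀ A' ⊂ A, φ A'ᶜ = 1) → dCoef (dualFun φ) A = 1) := by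
  intro A
  set ψ := dualFun φ with hψ
  -- forward direction, with the stronger conclusion dCoef ψ A = 1
  have fwd : (φ Aᶜ = 0 ∧ ∀ A' ⊂ A, φ A'ᶜ = 1) →
      (dCoef ψ A = 1 ∧ ∀ B ⊂ A, dCoef ψ B = 0) := by
    rintro ⟨hA, hsub⟩
    have hψ0 : ∀ B ⊂ A, ψ B = 0 := by
      intro B hB
      simp [hψ, dualFun, hsub B hB]
    have hd0 : ∀ B ⊂ A, dCoef ψ B = 0 := by
      intro B hB
      unfold dCoef
      apply Finset.sum_eq_zero
      intro C hC
      rw [Finset.mem_powerset] at hC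
      rw [hψ0 C (lt_of_le_of_lt hC hB), mul_zero]
    have hmob := mobius ψ A
    rw [Finset.sum_eq_single_of_mem A (Finset.mem_powerset_self A)
      (fun C hC hne => hd0 C (lt_of_le_of_ne (Finset.mem_powerset.mp hC) hne))] at hmob
    refine ⟨?_, hd0⟩
    rw [hmob]
    simp [hψ, dualFun, hA]
  constructor
  · constructor
    · intro h
      obtain ⟨h1, h2⟩ := fwd h
      exact ⟨by rw [h1]; norm_num, h2⟩
    · rintro ⟨hne, hmin⟩
      have hψsub : ∀ B ⊂ A, ψ B = 0 := by
        intro B hB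
        rw [← mobius ψ B]
        apply Finset.sum_eq_zero
        intro C hC
        exact hmin C (lt_of_le_of_lt (Finset.mem_powerset.mp hC) hB)
      have hψA : ψ A = dCoef ψ A := by
        rw [← mobius ψ A]
        rw [Finset.sum_eq_single_of_mem A (Finset.mem_powerset_self A)
          (fun C hC hc => hmin C (lt_of_le_of_ne (Finset.mem_powerset.mp hC) hc))]
      have hφA : φ Aᶜ = 0 := by
        rcases h01 Aᶜ with h | h
        · exact h
        · exfalso; apply hne; rw [← hψA]; simp [hψ, dualFun, h]
      refine ⟨hφA, fun A' hA' => ?_⟩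
      have := hψsub A' hA'
      simp only [hψ, dualFun] at this
      linarith
  · intro h
    exact (fwd h).1
end

section
/- Let φ be the structure function of a semicoherent system on n components with minimal path sets P₁,…,P_r. Then for every k with 1 ≤ k ≤ n, d_k = ∑_{∅ ≠ B ⊆ {1,…,r}, |⋃_{j∈B} P_j| = k} (−1)^{|B|−1}, where the sum is over all nonempty subsets B of {1,…,r} whose corresponding union of minimal path sets has exactly k elements. -/
open Finset

/-- `d_k = ∑_{A ⊆ [n], |A| = k} d(A)`. -/
def dk {n : ℕ} (φ : Finset (Fin n) → ℚ) (k : ℕ) : ℚ :=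
  ∑ A ∈ (Finset.univ : Finset (Fin n)).powerset.filter (fun A => A.card = k), dCoef φ A

lemma altQ {α : Type*} [DecidableEq α] (s : Finset α) :
    (∑ t ∈ s.powerset, (-1 : ℚ) ^ t.card) = if s = ∅ then 1 else 0 := by
  have h : ((∑ m ∈ s.powerset, (-1 : ℤ) ^ m.card : ℤ) : ℚ)
      = ((if s = ∅ then 1 else 0 : ℤ) : ℚ) := by
    exact_mod_cast congrArg (Int.cast : ℤ → ℚ) Finset.sum_powerset_neg_one_pow_card
  push_cast at h
  exact h

lemma phi_one_iff {n r : ℕ} (φ : Finset (Fin n) → ℚ)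
    (h01 : ∀ A, φ A = 0 ∨ φ A = 1)
    (hmono : ∀ A B : Finset (Fin n), A ⊆ B → φ A ≤ φ B)
    (P : Fin r → Finset (Fin n))
    (hP : ∀ A : Finset (Fin n),
      (∃ j, P j = A) ↔ (φ A = 1 ∧ ∀ A' ⊂ A, φ A' = 0)) :
    ∀ A, φ A = 1 ↔ ∃ j, P j ⊆ A := by
  intro A
  constructor
  · induction A using Finset.strongInduction with
    | _ A ih =>
      intro hA
      by_cases h : ∀ A' ⊂ A, φ A' = 0
      · obtain ⟨j, hj⟩ := (hP A).2 ⟨hA, h⟩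
        exact ⟨j, hj.le⟩
      · push_neg at h
        obtain ⟨A', hlt, hne⟩ := h
        have h1 : φ A' = 1 := (h01 A').resolve_left hne
        obtain ⟨j, hj⟩ := ih A' hlt h1
        exact ⟨j, hj.trans hlt.subset⟩
  · rintro ⟨j, hj⟩
    have h1 : φ (P j) = 1 := ((hP (P j)).1 ⟨j, rfl⟩).1
    have hle := hmono _ _ hj
    rcases h01 A with h | h
    · rw [h1, h] at hle; linarith
    · exact h

lemma phi_eq {n r : ℕ} (φ : Finset (Fin n) → ℚ)
    (h01 : ∀ A, φ A = 0 ∨ φ A = 1)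
    (hmono : ∀ A B : Finset (Fin n), A ⊆ B → φ A ≤ φ B)
    (P : Fin r → Finset (Fin n))
    (hP : ∀ A : Finset (Fin n),
      (∃ j, P j = A) ↔ (φ A = 1 ∧ ∀ A' ⊂ A, φ A' = 0)) (A : Finset (Fin n)) :
    φ A = ∑ B ∈ (Finset.univ : Finset (Fin r)).powerset.filter (fun B => B.Nonempty),
      (-1 : ℚ) ^ (B.card - 1) * (if B.biUnion P ⊆ A then 1 else 0) := by
  classical
  set S : Finset (Fin r) := Finset.univ.filter (fun j => P j ⊆ A) with hS
  have hmem : ∀ B : Finset (Fin r), (B.biUnion P ⊆ A ↔ B ⊆ S) := by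
    intro B
    rw [Finset.biUnion_subset]
    constructor
    · intro h j hj; simp [hS, h j hj]
    · intro h j hj; have := h hj; simp [hS] at this; exact this
  have hrhs : ∑ B ∈ (Finset.univ : Finset (Fin r)).powerset.filter (fun B => B.Nonempty),
      (-1 : ℚ) ^ (B.card - 1) * (if B.biUnion P ⊆ A then 1 else 0)
      = ∑ B ∈ S.powerset.filter (fun B => B.Nonempty), (-1 : ℚ) ^ (B.card - 1) := by
    have hsub : S.powerset.filter (fun B => B.Nonempty)
        ⊆ (Finset.univ : Finset (Fin r)).powerset.filter (fun B => B.Nonempty) := by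
      intro B hB
      simp only [Finset.mem_filter, Finset.mem_powerset] at hB ⊢
      exact ⟨Finset.subset_univ B, hB.2⟩
    rw [← Finset.sum_subset hsub (by
      intro B hB hBn
      simp only [Finset.mem_filter, Finset.mem_powerset] at hB hBn
      have : ¬ B ⊆ S := fun h => hBn ⟨h, hB.2⟩
      rw [if_neg (fun h => this ((hmem B).1 h)), mul_zero])]
    apply Finset.sum_congr rfl
    intro B hB
    simp only [Finset.mem_filter, Finset.mem_powerset] at hB
    rw [if_pos ((hmem B).2 hB.1), mul_one]
  rw [hrhs]
  have hsplit : ∑ B ∈ S.powerset.filter (fun B => B.Nonempty), (-1 : ℚ) ^ (B.card - 1)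
      = 1 - (if S = ∅ then 1 else 0) := by
    have h1 : ∑ B ∈ S.powerset, (-1 : ℚ) ^ B.card
        = (-1 : ℚ) ^ (∅ : Finset (Fin r)).card
          + ∑ B ∈ S.powerset.filter (fun B => B.Nonempty), (-1 : ℚ) ^ B.card := by
      rw [← Finset.sum_filter_add_sum_filter_not S.powerset (fun B => B.Nonempty)]
      rw [add_comm]
      congr 1
      have : S.powerset.filter (fun B => ¬B.Nonempty) = {∅} := by
        ext B
        simp only [Finset.mem_filter, Finset.mem_powerset,
          Finset.not_nonempty_iff_eq_empty, Finset.mem_singleton]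
        exact ⟨fun h => h.2, fun h => ⟨h ▸ Finset.empty_subset S, h⟩⟩
      rw [this, Finset.sum_singleton]
    have h2 : ∑ B ∈ S.powerset.filter (fun B => B.Nonempty), (-1 : ℚ) ^ B.card
        = -∑ B ∈ S.powerset.filter (fun B => B.Nonempty), (-1 : ℚ) ^ (B.card - 1) := by
      rw [← Finset.sum_neg_distrib]
      apply Finset.sum_congr rfl
      intro B hB
      have hc : 1 ≤ B.card := Finset.card_pos.2 (Finset.mem_filter.1 hB).2
      have hpow : (-1 : ℚ) ^ B.card = (-1 : ℚ) ^ (B.card - 1) * (-1) := by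
        conv_lhs => rw [show B.card = B.card - 1 + 1 from by omega]
        rw [pow_succ]
      rw [hpow]; ring
    have h3 := altQ S
    rw [h1, h2] at h3
    simp only [Finset.card_empty, pow_zero] at h3
    linarith [h3]
  rw [hsplit]
  by_cases hSe : S = ∅
  · have : ¬ ∃ j, P j ⊆ A := by
      rintro ⟨j, hj⟩
      have : j ∈ S := by simp [hS, hj]
      simp [hSe] at this
    have := (phi_one_iff φ h01 hmono P hP A)
    rcases h01 A with h | h
    · rw [h, hSe]; simp
    · exact absurd (this.1 h) ‹¬ ∃ j, P j ⊆ A›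
  · obtain ⟨j, hj⟩ := Finset.nonempty_iff_ne_empty.2 hSe
    simp only [hS, Finset.mem_filter] at hj
    rw [(phi_one_iff φ h01 hmono P hP A).2 ⟨j, hj.2⟩, if_neg hSe]
    ring

lemma innerAltSum {α : Type*} [DecidableEq α] (U A : Finset α) :
    ∑ C ∈ A.powerset, (-1 : ℚ) ^ (A.card - C.card) * (if U ⊆ C then 1 else 0)
      = if U = A then 1 else 0 := by
  simp only [mul_ite, mul_one, mul_zero]
  rw [← Finset.sum_filter]
  by_cases hUA : U ⊆ A
  · have hbij : ∑ C ∈ A.powerset.filter (fun C => U ⊆ C), (-1 : ℚ) ^ (A.card - C.card)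
        = ∑ D ∈ (A \ U).powerset, (-1 : ℚ) ^ ((A \ U).card - D.card) := by
      apply Finset.sum_nbij' (fun C => C \ U) (fun D => D ∪ U)
      · intro C hC
        simp only [Finset.mem_filter, Finset.mem_powerset] at hC ⊢
        exact Finset.sdiff_subset_sdiff hC.1 (Finset.Subset.refl U)
      · intro D hD
        simp only [Finset.mem_powerset] at hD
        simp only [Finset.mem_filter, Finset.mem_powerset]
        constructor
        · exact Finset.union_subset (hD.trans (Finset.sdiff_subset)) hUA
        · exact Finset.subset_union_right
      · intro C hC
        simp only [Finset.mem_filter, Finset.mem_powerset] at hC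
        exact Finset.sdiff_union_of_subset hC.2
      · intro D hD
        simp only [Finset.mem_powerset] at hD
        have hdisj : Disjoint D U := Finset.disjoint_of_subset_left hD Finset.sdiff_disjoint
        exact Finset.union_sdiff_cancel_right hdisj
      · intro C hC
        simp only [Finset.mem_filter, Finset.mem_powerset] at hC
        congr 1
        rw [Finset.card_sdiff_of_subset hUA, Finset.card_sdiff_of_subset hC.2]
        have h1 := Finset.card_le_card hC.1
        have h2 := Finset.card_le_card hC.2
        omega
    rw [hbij]
    have : ∑ D ∈ (A \ U).powerset, (-1 : ℚ) ^ ((A \ U).card - D.card)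
        = (-1 : ℚ) ^ (A \ U).card * ∑ D ∈ (A \ U).powerset, (-1 : ℚ) ^ D.card := by
      rw [Finset.mul_sum]
      apply Finset.sum_congr rfl
      intro D hD
      have hle := Finset.card_le_card (Finset.mem_powerset.1 hD)
      have h1 : ((-1 : ℚ)) ^ ((A \ U).card - D.card) * ((-1 : ℚ)) ^ D.card
          = (-1 : ℚ) ^ (A \ U).card := by
        rw [← pow_add]; congr 1; omega
      have hsq : ((-1 : ℚ) ^ D.card) * ((-1 : ℚ) ^ D.card) = 1 := by
        rw [← pow_add]
        exact Even.neg_one_pow ⟨D.card, rfl⟩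
      calc ((-1 : ℚ)) ^ ((A \ U).card - D.card)
          = ((-1 : ℚ)) ^ ((A \ U).card - D.card) * (((-1 : ℚ) ^ D.card) * ((-1 : ℚ) ^ D.card)) := by
            rw [hsq, mul_one]
        _ = (((-1 : ℚ)) ^ ((A \ U).card - D.card) * ((-1 : ℚ) ^ D.card)) * ((-1 : ℚ) ^ D.card) := by
            ring
        _ = (-1 : ℚ) ^ (A \ U).card * (-1 : ℚ) ^ D.card := by rw [h1]
    rw [this, altQ]
    by_cases he : A \ U = ∅
    · have hAU : U = A := hUA.antisymm (Finset.sdiff_eq_empty_iff_subset.1 he)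
      simp [he, hAU]
    · have hAU : U ≠ A := fun h => he (by simp [h])
      simp [he, hAU]
  · have hfil : A.powerset.filter (fun C => U ⊆ C) = ∅ := by
      apply Finset.filter_false_of_mem
      intro C hC hU
      exact hUA (hU.trans (Finset.mem_powerset.1 hC))
    have hne : U ≠ A := fun h => hUA (h ▸ Finset.Subset.refl U)
    simp [hfil, hne]

lemma dCoef_eq {n r : ℕ} (φ : Finset (Fin n) → ℚ)
    (h01 : ∀ A, φ A = 0 ∨ φ A = 1)
    (hmono : ∀ A B : Finset (Fin n), A ⊆ B → φ A ≤ φ B)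
    (P : Fin r → Finset (Fin n))
    (hP : ∀ A : Finset (Fin n),
      (∃ j, P j = A) ↔ (φ A = 1 ∧ ∀ A' ⊂ A, φ A' = 0)) (A : Finset (Fin n)) :
    dCoef φ A = ∑ B ∈ (Finset.univ : Finset (Fin r)).powerset.filter (fun B => B.Nonempty),
      (-1 : ℚ) ^ (B.card - 1) * (if B.biUnion P = A then 1 else 0) := by
  classical
  unfold dCoef
  calc ∑ C ∈ A.powerset, (-1 : ℚ) ^ (A.card - C.card) * φ C
      = ∑ C ∈ A.powerset, ∑ B ∈ (Finset.univ : Finset (Fin r)).powerset.filter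
          (fun B => B.Nonempty),
          (-1 : ℚ) ^ (B.card - 1) * ((-1 : ℚ) ^ (A.card - C.card)
            * (if B.biUnion P ⊆ C then 1 else 0)) := by
        apply Finset.sum_congr rfl
        intro C _
        rw [phi_eq φ h01 hmono P hP C, Finset.mul_sum]
        apply Finset.sum_congr rfl
        intro B _
        ring
    _ = ∑ B ∈ (Finset.univ : Finset (Fin r)).powerset.filter (fun B => B.Nonempty),
          (-1 : ℚ) ^ (B.card - 1) * ∑ C ∈ A.powerset,
          (-1 : ℚ) ^ (A.card - C.card) * (if B.biUnion P ⊆ C then 1 else 0) := by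
        rw [Finset.sum_comm]
        apply Finset.sum_congr rfl
        intro B _
        rw [Finset.mul_sum]
    _ = _ := by
        apply Finset.sum_congr rfl
        intro B _
        rw [innerAltSum]

/-- If `P₁,…,P_r` are the minimal path sets of a semicoherent system `φ`,
then for `1 ≤ k ≤ n`, `d_k = ∑_{∅ ≠ B ⊆ [r], |⋃_{j∈B} P_j| = k} (−1)^{|B|−1}`. -/
theorem dk_eq_incl_excl_min_path_sets
    (n r : ℕ) (hn : 1 ≤ n)
    (φ : Finset (Fin n) → ℚ)
    (h01 : ∀ A, φ A = 0 ∨ φ A = 1)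
    (hmono : ∀ A B : Finset (Fin n), A ⊆ B → φ A ≤ φ B)
    (hempty : φ ∅ = 0) (hfull : φ Finset.univ = 1)
    (P : Fin r → Finset (Fin n)) (hPinj : Function.Injective P)
    (hP : ∀ A : Finset (Fin n),
      (∃ j, P j = A) ↔ (φ A = 1 ∧ ∀ A' ⊂ A, φ A' = 0)) :
    ∀ k : ℕ, 1 ≤ k → k ≤ n →
      dk φ k = ∑ B ∈ (Finset.univ : Finset (Fin r)).powerset.filter
          (fun B => B.Nonempty ∧ (B.biUnion P).card = k),
          (-1 : ℚ) ^ (B.card - 1) := by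
  classical
  intro k _ _
  unfold dk
  calc ∑ A ∈ (Finset.univ : Finset (Fin n)).powerset.filter (fun A => A.card = k), dCoef φ A
      = ∑ A ∈ (Finset.univ : Finset (Fin n)).powerset.filter (fun A => A.card = k),
          ∑ B ∈ (Finset.univ : Finset (Fin r)).powerset.filter (fun B => B.Nonempty),
          (-1 : ℚ) ^ (B.card - 1) * (if B.biUnion P = A then 1 else 0) := by
        apply Finset.sum_congr rfl
        intro A _
        exact dCoef_eq φ h01 hmono P hP A
    _ = ∑ B ∈ (Finset.univ : Finset (Fin r)).powerset.filter (fun B => B.Nonempty),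
          (-1 : ℚ) ^ (B.card - 1)
            * ∑ A ∈ (Finset.univ : Finset (Fin n)).powerset.filter (fun A => A.card = k),
              (if B.biUnion P = A then 1 else 0) := by
        rw [Finset.sum_comm]
        apply Finset.sum_congr rfl
        intro B _
        rw [Finset.mul_sum]
    _ = ∑ B ∈ (Finset.univ : Finset (Fin r)).powerset.filter (fun B => B.Nonempty),
          (-1 : ℚ) ^ (B.card - 1) * (if (B.biUnion P).card = k then 1 else 0) := by
        apply Finset.sum_congr rfl
        intro B _
        congr 1
        rw [Finset.sum_ite_eq]
        by_cases hc : (B.biUnion P).card = k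
        · rw [if_pos (by simp [hc]), if_pos hc]
        · rw [if_neg (by simp [hc]), if_neg hc]
    _ = _ := by
        have : (Finset.univ : Finset (Fin r)).powerset.filter
            (fun B => B.Nonempty ∧ (B.biUnion P).card = k)
            = ((Finset.univ : Finset (Fin r)).powerset.filter (fun B => B.Nonempty)).filter
              (fun B => (B.biUnion P).card = k) := by
          rw [Finset.filter_filter]
        rw [this, Finset.sum_filter, Finset.sum_filter, Finset.sum_filter]
        apply Finset.sum_congr rfl
        intro B _
        by_cases h1 : B.Nonempty <;> by_cases h2 : (B.biUnion P).card = k <;> simp [h1, h2]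
end

section
/- Let φ be the structure function of a semicoherent system on n components with minimal cut sets K₁,…,K_s. Then for every k with 1 ≤ k ≤ n, d^D_k = ∑_{∅ ≠ B ⊆ {1,…,s}, |⋃_{j∈B} K_j| = k} (−1)^{|B|−1}, where the sum is over all nonempty subsets B of {1,…,s} whose corresponding union of minimal cut sets has exactly k elements. -/
open Finset

/-- ℚ-valued version of `Finset.sum_powerset_neg_one_pow_card`. -/
lemma sum_powerset_neg_one_pow_card_rat {α : Type*} [DecidableEq α] (x : Finset α) :
    ∑ m ∈ x.powerset, (-1 : ℚ) ^ m.card = if x = ∅ then 1 else 0 := by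
  have h := Finset.sum_powerset_neg_one_pow_card (x := x)
  have : ((∑ m ∈ x.powerset, (-1 : ℤ) ^ m.card : ℤ) : ℚ)
      = ∑ m ∈ x.powerset, (-1 : ℚ) ^ m.card := by push_cast; rfl
  rw [← this, h]
  split_ifs <;> norm_num

/-- Sum of `(-1)^(|T|-|C|)` over subsets `C` of `T`. -/
lemma sum_pow_sub {α : Type*} [DecidableEq α] (T : Finset α) :
    ∑ C ∈ T.powerset, (-1 : ℚ) ^ (T.card - C.card) = if T = ∅ then 1 else 0 := by
  have h : ∀ C ∈ T.powerset, (-1 : ℚ) ^ (T.card - C.card) = (-1) ^ T.card * (-1) ^ C.card := by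
    intro C hC
    have hle : C.card ≤ T.card := card_le_card (mem_powerset.mp hC)
    have : (-1 : ℚ) ^ T.card = (-1) ^ (T.card - C.card) * (-1) ^ C.card := by
      rw [← pow_add, Nat.sub_add_cancel hle]
    have hsq : ((-1 : ℚ) ^ C.card) * ((-1) ^ C.card) = 1 := by
      rw [← pow_add, ← two_mul, pow_mul]; norm_num
    calc (-1 : ℚ) ^ (T.card - C.card)
        = (-1 : ℚ) ^ (T.card - C.card) * (((-1) ^ C.card) * ((-1) ^ C.card)) := by rw [hsq, mul_one]
      _ = ((-1 : ℚ) ^ (T.card - C.card) * (-1) ^ C.card) * (-1) ^ C.card := by ring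
      _ = (-1) ^ T.card * (-1) ^ C.card := by rw [← this]
  rw [Finset.sum_congr rfl h, ← Finset.mul_sum, sum_powerset_neg_one_pow_card_rat]
  split_ifs with hT
  · subst hT; norm_num
  · ring

/-- Möbius transform of the indicator of `U ⊆ ·`. -/
lemma mobius_indicator {n : ℕ} (U A : Finset (Fin n)) :
    ∑ C ∈ A.powerset, (-1 : ℚ) ^ (A.card - C.card) * (if U ⊆ C then 1 else 0)
      = if A = U then 1 else 0 := by
  by_cases hUA : U ⊆ A
  · simp only [mul_ite, mul_one, mul_zero]
    rw [← Finset.sum_filter]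
    have key : ∑ C ∈ A.powerset.filter (fun C => U ⊆ C), (-1 : ℚ) ^ (A.card - C.card)
        = ∑ D ∈ (A \ U).powerset, (-1 : ℚ) ^ ((A \ U).card - D.card) := by
      refine Finset.sum_nbij' (fun C => C \ U) (fun D => D ∪ U) ?_ ?_ ?_ ?_ ?_
      · intro C hC
        simp only [mem_filter, mem_powerset] at hC ⊢
        exact sdiff_subset_sdiff hC.1 (Finset.Subset.refl U)
      · intro D hD
        simp only [mem_powerset] at hD
        simp only [mem_filter, mem_powerset]
        constructor
        · exact union_subset (hD.trans (sdiff_subset)) hUA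
        · exact subset_union_right
      · intro C hC
        simp only [mem_filter, mem_powerset] at hC
        exact sdiff_union_of_subset hC.2
      · intro D hD
        simp only [mem_powerset] at hD
        exact union_sdiff_cancel_right (Finset.disjoint_of_subset_left hD Finset.sdiff_disjoint)
      · intro C hC
        simp only [mem_filter, mem_powerset] at hC
        show (-1:ℚ) ^ (A.card - C.card) = (-1:ℚ) ^ ((A \ U).card - (C \ U).card)
        congr 1
        have h1 : (A \ U).card = A.card - U.card := card_sdiff_of_subset hUA
        have h2 : (C \ U).card = C.card - U.card := card_sdiff_of_subset hC.2
        have h3 : U.card ≤ C.card := card_le_card hC.2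
        have h4 : C.card ≤ A.card := card_le_card hC.1
        omega
    rw [key, sum_pow_sub]
    have : A \ U = ∅ ↔ A = U := by
      constructor
      · intro h; exact Finset.Subset.antisymm (by
          intro x hx
          by_contra hxu
          exact (Finset.notMem_empty x) (h ▸ Finset.mem_sdiff.mpr ⟨hx, hxu⟩)) hUA
      · intro h; subst h; simp
    rw [if_congr this rfl rfl]
  · have h1 : ∀ C ∈ A.powerset, (-1 : ℚ) ^ (A.card - C.card) * (if U ⊆ C then 1 else 0) = 0 := by
      intro C hC
      have : ¬ U ⊆ C := fun h => hUA (h.trans (mem_powerset.mp hC))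
      simp [this]
    rw [Finset.sum_eq_zero h1]
    have : A ≠ U := fun h => hUA (h ▸ Finset.Subset.refl A)
    simp [this]

section Main

variable {n s : ℕ}
  (φ : Finset (Fin n) → ℚ)
  (h01 : ∀ A, φ A = 0 ∨ φ A = 1)
  (hmono : ∀ A B : Finset (Fin n), A ⊆ B → φ A ≤ φ B)
  (K : Fin s → Finset (Fin n))
  (hK : ∀ A : Finset (Fin n),
      (∃ j, K j = A) ↔ (φ Aᶜ = 0 ∧ ∀ A' ⊂ A, φ A'ᶜ = 1))

include h01 hK in
lemma exists_min_cut : ∀ A : Finset (Fin n), φ Aᶜ = 0 → ∃ j, K j ⊆ A := by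
  intro A
  induction A using Finset.strongInduction with
  | _ A ih =>
    intro hA
    by_cases h : ∀ A' ⊂ A, φ A'ᶜ = 1
    · obtain ⟨j, hj⟩ := (hK A).2 ⟨hA, h⟩
      exact ⟨j, hj ▸ Finset.Subset.refl A⟩
    · push_neg at h
      obtain ⟨A', hsub, hne⟩ := h
      rcases h01 A'ᶜ with h0 | h1
      · obtain ⟨j, hj⟩ := ih A' hsub h0
        exact ⟨j, hj.trans hsub.subset⟩
      · exact absurd h1 hne

include h01 hmono hK in
lemma dual_eq_sum (A : Finset (Fin n)) :
    dualFun φ A = ∑ B ∈ (Finset.univ : Finset (Fin s)).powerset.filter (fun B => B.Nonempty),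
      (-1 : ℚ) ^ (B.card - 1) * (if B.biUnion K ⊆ A then 1 else 0) := by
  by_cases hcut : ∃ j, K j ⊆ A
  · -- LHS = 1
    obtain ⟨j0, hj0⟩ := hcut
    have hφ0 : φ Aᶜ = 0 := by
      have h1 : φ Aᶜ ≤ φ (K j0)ᶜ := hmono _ _ (Finset.compl_subset_compl.mpr hj0)
      have h2 : φ (K j0)ᶜ = 0 := ((hK (K j0)).1 ⟨j0, rfl⟩).1
      rcases h01 Aᶜ with h | h
      · exact h
      · rw [h] at h1; rw [h2] at h1; norm_num at h1
    have hL : dualFun φ A = 1 := by simp [dualFun, hφ0]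
    -- RHS
    set S : Finset (Fin s) := Finset.univ.filter (fun j => K j ⊆ A) with hS
    have hScond : ∀ B : Finset (Fin s), (B.biUnion K ⊆ A) ↔ B ⊆ S := by
      intro B
      rw [Finset.biUnion_subset]
      constructor
      · intro h x hx; exact mem_filter.mpr ⟨mem_univ x, h x hx⟩
      · intro h x hx; exact (mem_filter.mp (h hx)).2
    have hSne : S.Nonempty := ⟨j0, mem_filter.mpr ⟨mem_univ j0, hj0⟩⟩
    have step1 : ∑ B ∈ (Finset.univ : Finset (Fin s)).powerset.filter (fun B => B.Nonempty),
        (-1 : ℚ) ^ (B.card - 1) * (if B.biUnion K ⊆ A then 1 else 0)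
        = ∑ B ∈ S.powerset.filter (fun B => B.Nonempty), (-1 : ℚ) ^ (B.card - 1) := by
      have : ∀ B, (-1 : ℚ) ^ (B.card - 1) * (if B.biUnion K ⊆ A then 1 else 0)
          = if B ⊆ S then (-1 : ℚ) ^ (B.card - 1) else 0 := by
        intro B
        rw [if_congr (hScond B) rfl rfl]
        split_ifs <;> ring
      rw [Finset.sum_congr rfl (fun B _ => this B), ← Finset.sum_filter]
      congr 1
      ext B
      simp only [mem_filter, mem_powerset, subset_univ, true_and]
      tauto
    rw [hL, step1]
    -- compute the alternating sum over nonempty subsets of S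
    have hfe : S.powerset.filter (fun B => B.Nonempty) = S.powerset.erase ∅ := by
      ext B
      simp [Finset.nonempty_iff_ne_empty, and_comm]
    have hsum0 : ∑ B ∈ S.powerset, (-1 : ℚ) ^ B.card = 0 := by
      rw [sum_powerset_neg_one_pow_card_rat, if_neg (Finset.nonempty_iff_ne_empty.mp hSne)]
    have herase : ∑ B ∈ S.powerset.erase ∅, (-1 : ℚ) ^ B.card = -1 := by
      have := Finset.sum_erase_add S.powerset (fun B => (-1 : ℚ) ^ B.card)
        (Finset.empty_mem_powerset S)
      rw [hsum0] at this
      simp only [Finset.card_empty, pow_zero] at this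
      linarith
    have hneg : ∀ B ∈ S.powerset.erase ∅, (-1 : ℚ) ^ (B.card - 1) = -((-1 : ℚ) ^ B.card) := by
      intro B hB
      have hBne : B ≠ ∅ := (Finset.mem_erase.mp hB).1
      have hc : 1 ≤ B.card := Finset.card_pos.mpr (Finset.nonempty_iff_ne_empty.mpr hBne)
      have h : B.card = (B.card - 1) + 1 := by omega
      conv_rhs => rw [h]
      rw [pow_succ]
      ring
    rw [hfe, Finset.sum_congr rfl hneg, Finset.sum_neg_distrib]
    rw [herase]; norm_num
  · -- LHS = 0
    have hφ1 : φ Aᶜ = 1 := by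
      rcases h01 Aᶜ with h | h
      · exact absurd (exists_min_cut φ h01 K hK A h) hcut
      · exact h
    have hL : dualFun φ A = 0 := by simp [dualFun, hφ1]
    rw [hL]
    symm
    apply Finset.sum_eq_zero
    intro B hB
    have hBne : B.Nonempty := (mem_filter.mp hB).2
    have : ¬ B.biUnion K ⊆ A := by
      intro h
      obtain ⟨j, hj⟩ := hBne
      exact hcut ⟨j, (Finset.subset_biUnion_of_mem K hj).trans h⟩
    simp [this]

end Main

/-- If `K₁,…,K_s` are the minimal cut sets of a semicoherent system `φ`,
then for `1 ≤ k ≤ n`, `dᴰ_k = ∑_{∅ ≠ B ⊆ [s], |⋃_{j∈B} K_j| = k} (−1)^{|B|−1}`. -/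
theorem dual_dk_eq_incl_excl_min_cut_sets
    (n s : ℕ) (hn : 1 ≤ n)
    (φ : Finset (Fin n) → ℚ)
    (h01 : ∀ A, φ A = 0 ∨ φ A = 1)
    (hmono : ∀ A B : Finset (Fin n), A ⊆ B → φ A ≤ φ B)
    (hempty : φ ∅ = 0) (hfull : φ Finset.univ = 1)
    (K : Fin s → Finset (Fin n)) (hKinj : Function.Injective K)
    (hK : ∀ A : Finset (Fin n),
      (∃ j, K j = A) ↔ (φ Aᶜ = 0 ∧ ∀ A' ⊂ A, φ A'ᶜ = 1)) :
    ∀ k : ℕ, 1 ≤ k → k ≤ n →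
      dk (dualFun φ) k = ∑ B ∈ (Finset.univ : Finset (Fin s)).powerset.filter
          (fun B => B.Nonempty ∧ (B.biUnion K).card = k),
          (-1 : ℚ) ^ (B.card - 1) := by
  intro k hk1 hk2
  have hdC : ∀ A : Finset (Fin n), dCoef (dualFun φ) A
      = ∑ B ∈ (Finset.univ : Finset (Fin s)).powerset.filter (fun B => B.Nonempty),
        (-1 : ℚ) ^ (B.card - 1) * (if A = B.biUnion K then 1 else 0) := by
    intro A
    unfold dCoef
    rw [Finset.sum_congr rfl (fun C hC => by
      rw [dual_eq_sum φ h01 hmono K hK C, Finset.mul_sum])]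
    rw [Finset.sum_comm]
    refine Finset.sum_congr rfl fun B hB => ?_
    rw [← mobius_indicator (B.biUnion K) A, Finset.mul_sum]
    exact Finset.sum_congr rfl fun C _ => by ring
  unfold dk
  rw [Finset.sum_congr rfl fun A _ => hdC A]
  rw [Finset.sum_comm]
  have hinner : ∀ B : Finset (Fin s),
      ∑ A ∈ (Finset.univ : Finset (Fin n)).powerset.filter (fun A => A.card = k),
        (-1 : ℚ) ^ (B.card - 1) * (if A = B.biUnion K then 1 else 0)
      = (-1 : ℚ) ^ (B.card - 1) * (if (B.biUnion K).card = k then 1 else 0) := by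
    intro B
    rw [← Finset.mul_sum, Finset.sum_ite_eq']
    congr 1
    simp [mem_filter]
  rw [Finset.sum_congr rfl fun B _ => hinner B]
  have : ∀ B : Finset (Fin s), (-1 : ℚ) ^ (B.card - 1) * (if (B.biUnion K).card = k then 1 else 0)
      = if (B.biUnion K).card = k then (-1 : ℚ) ^ (B.card - 1) else 0 := by
    intro B; split_ifs <;> ring
  rw [Finset.sum_congr rfl fun B _ => this B]
  rw [← Finset.sum_filter]
  rw [Finset.filter_filter]
end

section
/- Let φ be the structure function of a semicoherent system on n components. Then α₁ = d₁, β₁ = d^D₁, α₂ = C(d₁, 2) + d₂, and β₂ = C(d^D₁, 2) + d^D₂, where C(m,2) = m(m−1)/2 denotes the binomial coefficient. -/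
open Finset

/-- `α_k`: the number of minimal path sets of size `k`. -/
def alpha {n : ℕ} (φ : Finset (Fin n) → ℚ) (k : ℕ) : ℕ :=
  ((Finset.univ : Finset (Fin n)).powerset.filter
    (fun A => A.card = k ∧ φ A = 1 ∧ ∀ A' ⊂ A, φ A' = 0)).card

/-- `β_k`: the number of minimal cut sets of size `k`. -/
def beta {n : ℕ} (φ : Finset (Fin n) → ℚ) (k : ℕ) : ℕ :=
  ((Finset.univ : Finset (Fin n)).powerset.filter
    (fun A => A.card = k ∧ φ Aᶜ = 0 ∧ ∀ A' ⊂ A, φ A'ᶜ = 1)).card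

/-! ### Auxiliary lemmas -/

lemma dCoef_singleton {n : ℕ} (φ : Finset (Fin n) → ℚ) (hempty : φ ∅ = 0) (i : Fin n) :
    dCoef φ {i} = φ {i} := by
  rw [dCoef, show ({i} : Finset (Fin n)) = insert i ∅ from rfl,
    Finset.sum_powerset_insert (by simp)]
  simp [hempty]

lemma dCoef_pair {n : ℕ} (φ : Finset (Fin n) → ℚ) (hempty : φ ∅ = 0) {i j : Fin n}
    (hij : i ≠ j) : dCoef φ {i, j} = φ {i, j} - φ {i} - φ {j} := by
  have h2 : ({i,j} : Finset (Fin n)).card = 2 := card_pair hij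
  rw [dCoef, show ({i,j} : Finset (Fin n)) = insert i {j} from rfl,
    Finset.sum_powerset_insert (by simp [hij]),
    show ({j} : Finset (Fin n)) = insert j ∅ from rfl,
    Finset.sum_powerset_insert (by simp), Finset.sum_powerset_insert (by simp)]
  simp only [Finset.powerset_empty, Finset.sum_singleton, Finset.card_empty,
    show (insert i (insert j ∅) : Finset (Fin n)) = ({i,j} : Finset (Fin n)) from rfl,
    show (insert i ∅ : Finset (Fin n)) = ({i} : Finset (Fin n)) from rfl,
    show (insert j ∅ : Finset (Fin n)) = ({j} : Finset (Fin n)) from rfl,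
    Finset.card_singleton, h2, hempty]
  norm_num
  ring

lemma sum_card_one {n : ℕ} (F : Finset (Fin n) → ℚ) :
    ∑ A ∈ (Finset.univ : Finset (Fin n)).powerset.filter (fun A => A.card = 1), F A
      = ∑ i : Fin n, F {i} := by
  rw [← Finset.powersetCard_eq_filter, Finset.powersetCard_one, Finset.sum_map]
  rfl

lemma dk_one {n : ℕ} (φ : Finset (Fin n) → ℚ) (hempty : φ ∅ = 0) :
    dk φ 1 = ∑ i : Fin n, φ {i} := by
  rw [dk, sum_card_one]
  exact Finset.sum_congr rfl fun i _ => dCoef_singleton φ hempty i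

/-- Doubling a sum over 2-element subsets gives the sum over ordered pairs of
distinct elements. -/
lemma sum_card_two {n : ℕ} (F : Finset (Fin n) → ℚ) :
    2 * ∑ A ∈ (Finset.univ : Finset (Fin n)).powerset.filter (fun A => A.card = 2), F A
      = ∑ p ∈ (Finset.univ : Finset (Fin n)).offDiag, F {p.1, p.2} := by
  rw [← Finset.powersetCard_eq_filter]
  have hmaps : ∀ p ∈ (Finset.univ : Finset (Fin n)).offDiag,
      ({p.1, p.2} : Finset (Fin n)) ∈ (Finset.univ : Finset (Fin n)).powersetCard 2 := by
    intro p hp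
    rw [Finset.mem_offDiag] at hp
    rw [Finset.mem_powersetCard]
    exact ⟨Finset.subset_univ _, card_pair hp.2.2⟩
  rw [← Finset.sum_fiberwise_of_maps_to hmaps (fun p => F {p.1, p.2}), Finset.mul_sum]
  refine Finset.sum_congr rfl fun A hA => ?_
  rw [Finset.mem_powersetCard] at hA
  obtain ⟨i, j, hij, rfl⟩ := Finset.card_eq_two.mp hA.2
  have hfib : (Finset.univ : Finset (Fin n)).offDiag.filter
      (fun p => ({p.1, p.2} : Finset (Fin n)) = {i, j}) = {(i,j), (j,i)} := by
    ext p
    simp only [Finset.mem_filter, Finset.mem_offDiag, Finset.mem_univ, true_and,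
      Finset.mem_insert, Finset.mem_singleton]
    constructor
    · rintro ⟨hne, hp⟩
      have h1 : p.1 = i ∨ p.1 = j := by
        have : p.1 ∈ ({i, j} : Finset (Fin n)) := hp ▸ (by simp)
        simpa using this
      have h2 : p.2 = i ∨ p.2 = j := by
        have : p.2 ∈ ({i, j} : Finset (Fin n)) := hp ▸ (by simp)
        simpa using this
      rcases h1 with h1 | h1 <;> rcases h2 with h2 | h2
      · exact absurd (h1.trans h2.symm) hne
      · exact Or.inl (Prod.ext h1 h2)
      · exact Or.inr (Prod.ext h1 h2)
      · exact absurd (h1.trans h2.symm) hne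
    · rintro (rfl | rfl)
      · exact ⟨hij, rfl⟩
      · exact ⟨hij.symm, Finset.pair_comm j i⟩
  rw [hfib, Finset.sum_pair (by simp [hij, Prod.ext_iff])]
  simp [Finset.pair_comm j i]
  ring

/-- Proper subsets of a pair. -/
lemma ssubset_pair_min {n : ℕ} (φ : Finset (Fin n) → ℚ) (hempty : φ ∅ = 0)
    {i j : Fin n} (hij : i ≠ j) :
    (∀ A' ⊂ ({i, j} : Finset (Fin n)), φ A' = 0) ↔ (φ {i} = 0 ∧ φ {j} = 0) := by
  constructor
  · intro h
    refine ⟨h {i} ?_, h {j} ?_⟩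
    · rw [Finset.pair_comm]
      exact Finset.ssubset_insert (by simp [Ne.symm hij])
    · exact Finset.ssubset_insert (by simp [hij])
  · rintro ⟨h1, h2⟩ A' hA'
    have hcard : A'.card < 2 := by
      have := Finset.card_lt_card hA'
      rwa [card_pair hij] at this
    interval_cases h : A'.card
    · rw [Finset.card_eq_zero.mp h]; exact hempty
    · obtain ⟨a, rfl⟩ := Finset.card_eq_one.mp h
      have : a ∈ ({i, j} : Finset (Fin n)) := hA'.1 (by simp)
      rcases Finset.mem_insert.mp this with rfl | ha
      · exact h1
      · rw [Finset.mem_singleton.mp ha]; exact h2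

lemma alpha_one {n : ℕ} (φ : Finset (Fin n) → ℚ)
    (h01 : ∀ A, φ A = 0 ∨ φ A = 1) (hempty : φ ∅ = 0) :
    (alpha φ 1 : ℚ) = dk φ 1 := by
  rw [alpha, dk]
  have hfe : ((Finset.univ : Finset (Fin n)).powerset.filter
      (fun A => A.card = 1 ∧ φ A = 1 ∧ ∀ A' ⊂ A, φ A' = 0))
      = ((Finset.univ : Finset (Fin n)).powerset.filter (fun A => A.card = 1)).filter
        (fun A => φ A = 1) := by
    rw [Finset.filter_filter]
    refine Finset.filter_congr fun A _ => ?_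
    constructor
    · rintro ⟨h1, h2, _⟩; exact ⟨h1, h2⟩
    · rintro ⟨h1, h2⟩
      refine ⟨h1, h2, fun A' hA' => ?_⟩
      have : A'.card < 1 := by
        have := Finset.card_lt_card hA'; omega
      rw [Finset.card_eq_zero.mp (by omega : A'.card = 0)]
      exact hempty
  rw [hfe, Finset.natCast_card_filter]
  refine Finset.sum_congr rfl fun A hA => ?_
  rw [Finset.mem_filter] at hA
  obtain ⟨a, rfl⟩ := Finset.card_eq_one.mp hA.2
  rw [dCoef_singleton φ hempty a]
  rcases h01 {a} with h | h <;> simp [h]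

lemma alpha_two {n : ℕ} (φ : Finset (Fin n) → ℚ)
    (h01 : ∀ A, φ A = 0 ∨ φ A = 1)
    (hmono : ∀ A B : Finset (Fin n), A ⊆ B → φ A ≤ φ B)
    (hempty : φ ∅ = 0) :
    (alpha φ 2 : ℚ) = dk φ 1 * (dk φ 1 - 1) / 2 + dk φ 2 := by
  classical
  set P2 := (Finset.univ : Finset (Fin n)).powerset.filter (fun A => A.card = 2) with hP2
  -- alpha as a sum over P2
  have hfe : ((Finset.univ : Finset (Fin n)).powerset.filter
      (fun A => A.card = 2 ∧ φ A = 1 ∧ ∀ A' ⊂ A, φ A' = 0))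
      = P2.filter (fun A => φ A = 1 ∧ ∀ A' ⊂ A, φ A' = 0) := by
    rw [hP2, Finset.filter_filter]
  have halpha : (alpha φ 2 : ℚ)
      = ∑ A ∈ P2, (if φ A = 1 ∧ ∀ A' ⊂ A, φ A' = 0 then (1 : ℚ) else 0) := by
    rw [alpha, hfe, Finset.natCast_card_filter]
  -- pointwise identity on 2-element sets
  have hpt : ∀ A ∈ P2, (if φ A = 1 ∧ ∀ A' ⊂ A, φ A' = 0 then (1 : ℚ) else 0)
      = dCoef φ A + ∏ x ∈ A, φ {x} := by
    intro A hA
    rw [hP2, Finset.mem_filter] at hA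
    obtain ⟨i, j, hij, rfl⟩ := Finset.card_eq_two.mp hA.2
    rw [dCoef_pair φ hempty hij, Finset.prod_pair hij]
    have hmin := ssubset_pair_min φ hempty hij
    have hm1 : φ {i} ≤ φ {i, j} := hmono _ _ (by simp)
    have hm2 : φ {j} ≤ φ {i, j} := hmono _ _ (by simp)
    rcases h01 {i} with hi | hi <;> rcases h01 {j} with hj | hj
    · rcases h01 {i, j} with hij2 | hij2 <;> simp [hmin, hi, hj, hij2]
    · have hij2 : φ {i, j} = 1 := le_antisymm (by rcases h01 {i,j} with h | h <;> simp [h])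
        (by rw [← hj]; exact hm2)
      simp [hmin, hi, hj, hij2]
    · have hij2 : φ {i, j} = 1 := le_antisymm (by rcases h01 {i,j} with h | h <;> simp [h])
        (by rw [← hi]; exact hm1)
      simp [hmin, hi, hj, hij2]
    · have hij2 : φ {i, j} = 1 := le_antisymm (by rcases h01 {i,j} with h | h <;> simp [h])
        (by rw [← hi]; exact hm1)
      simp [hmin, hi, hj, hij2]
  have halpha2 : (alpha φ 2 : ℚ) = dk φ 2 + ∑ A ∈ P2, ∏ x ∈ A, φ {x} := by
    rw [halpha, Finset.sum_congr rfl hpt, Finset.sum_add_distrib, dk]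
  -- the elementary symmetric part
  set S := dk φ 1 with hS
  have hSsum : S = ∑ i : Fin n, φ {i} := dk_one φ hempty
  have hE : 2 * ∑ A ∈ P2, ∏ x ∈ A, φ {x} = S * S - S := by
    rw [hP2, sum_card_two]
    have : ∑ p ∈ (Finset.univ : Finset (Fin n)).offDiag, ∏ x ∈ ({p.1, p.2} : Finset (Fin n)), φ {x}
        = ∑ p ∈ (Finset.univ : Finset (Fin n)).offDiag, φ {p.1} * φ {p.2} := by
      refine Finset.sum_congr rfl fun p hp => ?_
      rw [Finset.mem_offDiag] at hp
      exact Finset.prod_pair hp.2.2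
    rw [this]
    have hsq : S * S = ∑ p ∈ (Finset.univ : Finset (Fin n)) ×ˢ (Finset.univ : Finset (Fin n)),
        φ {p.1} * φ {p.2} := by
      rw [hSsum, Finset.sum_mul_sum, Finset.sum_product]
    have hsplit : ∑ p ∈ (Finset.univ : Finset (Fin n)) ×ˢ (Finset.univ : Finset (Fin n)),
        φ {p.1} * φ {p.2}
        = (∑ p ∈ (Finset.univ : Finset (Fin n)).diag, φ {p.1} * φ {p.2})
          + ∑ p ∈ (Finset.univ : Finset (Fin n)).offDiag, φ {p.1} * φ {p.2} := by
      rw [← Finset.diag_union_offDiag, Finset.sum_union (Finset.disjoint_diag_offDiag _)]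
    have hdiag : (∑ p ∈ (Finset.univ : Finset (Fin n)).diag, φ {p.1} * φ {p.2}) = S := by
      rw [Finset.sum_diag, hSsum]
      refine Finset.sum_congr rfl fun i _ => ?_
      rcases h01 {i} with h | h <;> simp [h]
    rw [hsq, hsplit, hdiag]
    ring
  rw [halpha2]
  linarith [hE]

lemma beta_eq_alpha_dual {n : ℕ} (φ : Finset (Fin n) → ℚ) (k : ℕ) :
    beta φ k = alpha (dualFun φ) k := by
  rw [beta, alpha]
  congr 1
  refine Finset.filter_congr fun A _ => ?_
  unfold dualFun
  constructor
  · rintro ⟨h1, h2, h3⟩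
    exact ⟨h1, by rw [h2]; ring, fun A' hA' => by rw [h3 A' hA']; ring⟩
  · rintro ⟨h1, h2, h3⟩
    refine ⟨h1, by linarith, fun A' hA' => by have := h3 A' hA'; linarith⟩

/-- `α₁ = d₁`, `β₁ = dᴰ₁`, `α₂ = C(d₁,2) + d₂`, and
`β₂ = C(dᴰ₁,2) + dᴰ₂`, where `C(m,2) = m(m−1)/2`. -/
theorem small_min_path_cut_sets_from_dk
    (n : ℕ) (hn : 1 ≤ n)
    (φ : Finset (Fin n) → ℚ)
    (h01 : ∀ A, φ A = 0 ∨ φ A = 1)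
    (hmono : ∀ A B : Finset (Fin n), A ⊆ B → φ A ≤ φ B)
    (hempty : φ ∅ = 0) (hfull : φ Finset.univ = 1) :
    (alpha φ 1 : ℚ) = dk φ 1 ∧
    (beta φ 1 : ℚ) = dk (dualFun φ) 1 ∧
    (alpha φ 2 : ℚ) = dk φ 1 * (dk φ 1 - 1) / 2 + dk φ 2 ∧
    (beta φ 2 : ℚ) = dk (dualFun φ) 1 * (dk (dualFun φ) 1 - 1) / 2 + dk (dualFun φ) 2 := by
  have hd01 : ∀ A, dualFun φ A = 0 ∨ dualFun φ A = 1 := by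
    intro A
    rcases h01 Aᶜ with h | h
    · right; rw [dualFun, h]; ring
    · left; rw [dualFun, h]; ring
  have hdmono : ∀ A B : Finset (Fin n), A ⊆ B → dualFun φ A ≤ dualFun φ B := by
    intro A B hAB
    have : φ Bᶜ ≤ φ Aᶜ := hmono _ _ (Finset.compl_subset_compl.mpr hAB)
    unfold dualFun; linarith
  have hdempty : dualFun φ ∅ = 0 := by
    rw [dualFun, Finset.compl_empty, hfull]; ring
  refine ⟨alpha_one φ h01 hempty, ?_, alpha_two φ h01 hmono hempty, ?_⟩
  · rw [beta_eq_alpha_dual]; exact alpha_one (dualFun φ) hd01 hdempty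
  · rw [beta_eq_alpha_dual]; exact alpha_two (dualFun φ) hd01 hdmono hdempty
end

section
/- Let φ be the structure function of a semicoherent system on n components, let (s₁,…,s_n) be its structural signature, and let (s^D₁,…,s^D_n) be the structural signature of the dual structure function φ^D. Then s^D_k = s_{n+1−k} for every k = 1,…,n. -/
open Finset

/-- The structural signature: `s_k = ∑_{|A| = n−k+1} φ(A)/C(n,|A|) − ∑_{|A| = n−k} φ(A)/C(n,|A|)`. -/
def sig {n : ℕ} (φ : Finset (Fin n) → ℚ) (k : ℕ) : ℚ :=
  (∑ A ∈ (Finset.univ : Finset (Fin n)).powerset.filter (fun A => A.card = n - k + 1),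
      φ A / (n.choose A.card : ℚ))
  - ∑ A ∈ (Finset.univ : Finset (Fin n)).powerset.filter (fun A => A.card = n - k),
      φ A / (n.choose A.card : ℚ)

lemma sum_card_eq {n m : ℕ} (f : Finset (Fin n) → ℚ) :
    ∑ A ∈ (univ : Finset (Fin n)).powerset.filter (fun A => A.card = m),
      f A / (n.choose A.card : ℚ)
    = ∑ A ∈ powersetCard m (univ : Finset (Fin n)), f A / (n.choose m : ℚ) := by
  rw [Finset.powersetCard_eq_filter]
  exact Finset.sum_congr rfl fun A hA => by
    rw [Finset.mem_filter] at hA; rw [hA.2]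

lemma sum_one {n m : ℕ} (hm : m ≤ n) :
    ∑ _A ∈ powersetCard m (univ : Finset (Fin n)), (1:ℚ) / (n.choose m : ℚ) = 1 := by
  rw [Finset.sum_const, Finset.card_powersetCard, Finset.card_univ, Fintype.card_fin,
    nsmul_eq_mul, mul_one_div, div_self]
  exact_mod_cast (Nat.choose_pos hm).ne'

lemma sum_compl {n m : ℕ} (hm : m ≤ n) (φ : Finset (Fin n) → ℚ) :
    ∑ A ∈ powersetCard m (univ : Finset (Fin n)), φ Aᶜ
    = ∑ B ∈ powersetCard (n - m) (univ : Finset (Fin n)), φ B := by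
  refine Finset.sum_nbij' (fun A => Aᶜ) (fun B => Bᶜ) ?_ ?_ ?_ ?_ ?_ <;>
    intro a ha <;>
    simp only [Finset.mem_powersetCard_univ, Finset.card_compl, Fintype.card_fin,
      compl_compl] at * <;> omega

/-- The structural signature of the dual system satisfies
`sᴰ_k = s_{n+1−k}` for every `k = 1,…,n`. -/
theorem dual_signature_reverse
    (n : ℕ) (hn : 1 ≤ n)
    (φ : Finset (Fin n) → ℚ)
    (h01 : ∀ A, φ A = 0 ∨ φ A = 1)
    (hmono : ∀ A B : Finset (Fin n), A ⊆ B → φ A ≤ φ B)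
    (hempty : φ ∅ = 0) (hfull : φ Finset.univ = 1) :
    ∀ k : ℕ, 1 ≤ k → k ≤ n → sig (dualFun φ) k = sig φ (n + 1 - k) := by
  intro k hk1 hk2
  unfold sig dualFun
  have h1 : n - (n + 1 - k) + 1 = k := by omega
  have h2 : n - (n + 1 - k) = k - 1 := by omega
  rw [h1, h2, sum_card_eq, sum_card_eq, sum_card_eq, sum_card_eq]
  simp only [sub_div, Finset.sum_sub_distrib]
  rw [sum_one (by omega), sum_one (by omega), ← Finset.sum_div, ← Finset.sum_div,
    sum_compl (by omega), sum_compl (by omega)]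
  have h3 : n - (n - k + 1) = k - 1 := by omega
  have h4 : n - (n - k) = k := by omega
  have h5 : n.choose (n - k + 1) = n.choose (k - 1) := by
    have h : n - k + 1 = n - (k - 1) := by omega
    rw [h, Nat.choose_symm (by omega)]
  have h6 : n.choose (n - k) = n.choose k := by
    rw [Nat.choose_symm (by omega)]
  rw [h3, h4, h5, h6, ← Finset.sum_div, ← Finset.sum_div]
  ring
end

section
/- Let φ be the structure function of a semicoherent system on n components with structural signature (s₁,…,s_n). Then for every k = 1,…,n, s_k = ∑_{j=1}^{k} (C(k−1, j−1)/C(n, j)) · d^D_j, where C(·,·) denotes binomial coefficients and the identity is an equality of rational numbers. -/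
open Finset

/-- Inner alternating sum: `∑_{C ⊆ B ⊆ A} (-1)^{|B|-|C|} = [C = A]`. -/
lemma inner_alt {α : Type*} [DecidableEq α] (A C : Finset α) (hCA : C ⊆ A) :
    ∑ B ∈ A.powerset.filter (fun B => C ⊆ B), (-1 : ℚ) ^ (B.card - C.card)
      = if C = A then 1 else 0 := by
  have key : ∑ B ∈ A.powerset.filter (fun B => C ⊆ B), (-1 : ℚ) ^ (B.card - C.card)
      = ∑ D ∈ (A \ C).powerset, (-1 : ℚ) ^ D.card := by
    refine Finset.sum_bij' (fun B _ => B \ C) (fun D _ => C ∪ D) ?_ ?_ ?_ ?_ ?_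
    · intro B hB
      simp only [mem_filter, mem_powerset] at hB
      exact mem_powerset.2 (sdiff_subset_sdiff hB.1 le_rfl)
    · intro D hD
      simp only [mem_powerset] at hD
      simp only [mem_filter, mem_powerset]
      exact ⟨union_subset hCA (hD.trans sdiff_subset), subset_union_left⟩
    · intro B hB
      simp only [mem_filter, mem_powerset] at hB
      exact union_sdiff_of_subset hB.2
    · intro D hD
      simp only [mem_powerset] at hD
      exact union_sdiff_cancel_left (disjoint_of_subset_right hD disjoint_sdiff)
    · intro B hB
      simp only [mem_filter, mem_powerset] at hB
      rw [card_sdiff_of_subset hB.2]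
  rw [key]
  have hcast : ∑ D ∈ (A \ C).powerset, (-1 : ℚ) ^ D.card
      = ((∑ D ∈ (A \ C).powerset, (-1 : ℤ) ^ D.card : ℤ) : ℚ) := by
    push_cast; rfl
  rw [hcast, Finset.sum_powerset_neg_one_pow_card]
  by_cases h : A \ C = ∅
  · have : C = A := le_antisymm hCA (sdiff_eq_empty_iff_subset.1 h)
    simp [h, this]
  · have : ¬ C = A := fun hh => h (by simp [hh])
    simp [h, this]

/-- Counting supersets of a given cardinality. -/
lemma count_supersets {n : ℕ} (m : ℕ) (B : Finset (Fin n)) :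
    ((Finset.univ : Finset (Fin n)).powerset.filter (fun A => A.card = m ∧ B ⊆ A)).card
      = if B.card ≤ m then (n - B.card).choose (m - B.card) else 0 := by
  split_ifs with h
  · have key : ((Finset.univ : Finset (Fin n)).powerset.filter (fun A => A.card = m ∧ B ⊆ A)).card
        = (Bᶜ.powersetCard (m - B.card)).card := by
      refine Finset.card_bij' (fun A _ => A \ B) (fun D _ => B ∪ D) ?_ ?_ ?_ ?_
      · intro A hA
        simp only [mem_filter, mem_powerset] at hA
        rw [mem_powersetCard]
        constructor
        · intro x hx
          simp only [mem_sdiff] at hx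
          simp [mem_compl, hx.2]
        · rw [card_sdiff_of_subset hA.2.2, hA.2.1]
      · intro D hD
        rw [mem_powersetCard] at hD
        simp only [mem_filter, mem_powerset]
        have hdisj : Disjoint B D := by
          rw [disjoint_right]
          intro x hx
          have := hD.1 hx
          simpa [mem_compl] using this
        refine ⟨subset_univ _, ?_, subset_union_left⟩
        rw [card_union_of_disjoint hdisj, hD.2]
        omega
      · intro A hA
        simp only [mem_filter, mem_powerset] at hA
        exact union_sdiff_of_subset hA.2.2
      · intro D hD
        rw [mem_powersetCard] at hD
        refine union_sdiff_cancel_left ?_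
        rw [disjoint_right]
        intro x hx
        have := hD.1 hx
        simpa [mem_compl] using this
    rw [key, card_powersetCard, card_compl, Fintype.card_fin]
  · push_neg at h
    rw [Finset.card_eq_zero, filter_eq_empty_iff]
    rintro A -
    rintro ⟨h1, h2⟩
    exact absurd (card_le_card h2) (by omega)

/-- Sum of ψ over sets of cardinality m, via the dk's. -/
lemma T_eq {n : ℕ} (ψ : Finset (Fin n) → ℚ) (m : ℕ) (hm : m ≤ n) :
    (∑ A ∈ (Finset.univ : Finset (Fin n)).powerset.filter (fun A => A.card = m), ψ A)
      = ∑ j ∈ Finset.range (m + 1), ((n - j).choose (m - j) : ℚ) * dk ψ j := by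
  have step1 : (∑ A ∈ (Finset.univ : Finset (Fin n)).powerset.filter (fun A => A.card = m), ψ A)
      = ∑ A ∈ (Finset.univ : Finset (Fin n)).powerset.filter (fun A => A.card = m),
          ∑ B ∈ A.powerset, dCoef ψ B := by
    exact Finset.sum_congr rfl fun A _ => (mobius ψ A).symm
  rw [step1]
  rw [Finset.sum_comm' (t' := (Finset.univ : Finset (Fin n)).powerset)
    (s' := fun B => (Finset.univ : Finset (Fin n)).powerset.filter
        (fun A => A.card = m ∧ B ⊆ A))
    (by
      intro A B
      simp only [mem_powerset, mem_filter, subset_univ, true_and]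
      tauto)]
  have step2 : ∀ B ∈ (Finset.univ : Finset (Fin n)).powerset,
      (∑ A ∈ (Finset.univ : Finset (Fin n)).powerset.filter
          (fun A => A.card = m ∧ B ⊆ A), dCoef ψ B)
        = (if B.card ≤ m then ((n - B.card).choose (m - B.card) : ℚ) else 0) * dCoef ψ B := by
    intro B _
    rw [Finset.sum_const, count_supersets]
    split_ifs with h <;> simp
  rw [Finset.sum_congr rfl step2]
  -- now group by cardinality
  rw [← Finset.sum_fiberwise_of_maps_to (g := Finset.card) (t := Finset.range (n + 1))
    (by
      intro B _
      rw [mem_range, Nat.lt_succ_iff]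
      exact (card_le_card (subset_univ B)).trans (by simp))]
  have step3 : ∀ j ∈ Finset.range (n + 1),
      (∑ B ∈ (Finset.univ : Finset (Fin n)).powerset.filter (fun B => B.card = j),
        (if B.card ≤ m then ((n - B.card).choose (m - B.card) : ℚ) else 0) * dCoef ψ B)
        = (if j ≤ m then ((n - j).choose (m - j) : ℚ) else 0) * dk ψ j := by
    intro j _
    rw [dk, Finset.mul_sum]
    refine Finset.sum_congr rfl fun B hB => ?_
    rw [mem_filter] at hB
    rw [hB.2]
  rw [Finset.sum_congr rfl step3]
  rw [← Finset.sum_subset (Finset.range_subset_range.2 (by omega) :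
      Finset.range (m + 1) ⊆ Finset.range (n + 1))
    (by
      intro j _ hj
      rw [mem_range, Nat.lt_succ_iff] at hj
      push_neg at hj
      rw [if_neg (by omega)]
      ring)]
  refine Finset.sum_congr rfl fun j hj => ?_
  rw [mem_range, Nat.lt_succ_iff] at hj
  rw [if_pos hj]

/-- Dual sum relation. -/
lemma T_dual {n : ℕ} (φ : Finset (Fin n) → ℚ) (m : ℕ) (hm : m ≤ n) :
    (∑ A ∈ (Finset.univ : Finset (Fin n)).powerset.filter (fun A => A.card = m), dualFun φ A)
      = (n.choose m : ℚ)
        - ∑ A ∈ (Finset.univ : Finset (Fin n)).powerset.filter (fun A => A.card = n - m), φ A := by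
  unfold dualFun
  rw [Finset.sum_sub_distrib]
  congr 1
  · rw [Finset.sum_const, ← powersetCard_eq_filter]
    have : ((Finset.univ : Finset (Fin n)).powersetCard m).card = n.choose m := by
      rw [card_powersetCard, card_univ, Fintype.card_fin]
    rw [this]; simp
  · refine Finset.sum_bij' (fun A _ => Aᶜ) (fun A _ => Aᶜ) ?_ ?_ ?_ ?_ ?_
    · intro A hA
      simp only [mem_filter, mem_powerset] at hA ⊢
      refine ⟨subset_univ _, ?_⟩
      rw [card_compl, Fintype.card_fin, hA.2]
    · intro A hA
      simp only [mem_filter, mem_powerset] at hA ⊢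
      refine ⟨subset_univ _, ?_⟩
      rw [card_compl, Fintype.card_fin, hA.2]
      omega
    · intro A _; simp
    · intro A _; simp
    · intro A _; rfl

/-- `s_k = ∑_{j=1}^{k} (C(k−1, j−1)/C(n, j)) · dᴰ_j` for `k = 1,…,n`. -/
theorem signature_from_dual_dk
    (n : ℕ) (hn : 1 ≤ n)
    (φ : Finset (Fin n) → ℚ)
    (h01 : ∀ A, φ A = 0 ∨ φ A = 1)
    (hmono : ∀ A B : Finset (Fin n), A ⊆ B → φ A ≤ φ B)
    (hempty : φ ∅ = 0) (hfull : φ Finset.univ = 1) :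
    ∀ k : ℕ, 1 ≤ k → k ≤ n →
      sig φ k = ∑ j ∈ Finset.Icc 1 k,
        (((k - 1).choose (j - 1) : ℚ) / (n.choose j : ℚ)) * dk (dualFun φ) j := by
  intro k hk1 hkn
  have hck : (n.choose k : ℚ) ≠ 0 := Nat.cast_ne_zero.2 (Nat.choose_pos hkn).ne'
  have hck1 : (n.choose (k - 1) : ℚ) ≠ 0 :=
    Nat.cast_ne_zero.2 (Nat.choose_pos (by omega)).ne'
  have hcj : ∀ j, j ≤ n → (n.choose j : ℚ) ≠ 0 := fun j hj =>
    Nat.cast_ne_zero.2 (Nat.choose_pos hj).ne'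
  set ψ := dualFun φ with hψ
  set T : ℕ → ℚ := fun m =>
    ∑ A ∈ (Finset.univ : Finset (Fin n)).powerset.filter (fun A => A.card = m), ψ A with hT
  -- Step 1: sig in terms of T
  have hsig : sig φ k = T k / (n.choose k : ℚ) - T (k - 1) / (n.choose (k - 1) : ℚ) := by
    unfold sig
    have h1 : ∑ A ∈ (Finset.univ : Finset (Fin n)).powerset.filter
          (fun A => A.card = n - k + 1), φ A / (n.choose A.card : ℚ)
        = (∑ A ∈ (Finset.univ : Finset (Fin n)).powerset.filter
            (fun A => A.card = n - k + 1), φ A) / (n.choose (k - 1) : ℚ) := by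
      rw [Finset.sum_div]
      refine Finset.sum_congr rfl fun A hA => ?_
      rw [mem_filter] at hA
      rw [hA.2, show n - k + 1 = n - (k - 1) from by omega, Nat.choose_symm (by omega)]
    have h2 : ∑ A ∈ (Finset.univ : Finset (Fin n)).powerset.filter
          (fun A => A.card = n - k), φ A / (n.choose A.card : ℚ)
        = (∑ A ∈ (Finset.univ : Finset (Fin n)).powerset.filter
            (fun A => A.card = n - k), φ A) / (n.choose k : ℚ) := by
      rw [Finset.sum_div]
      refine Finset.sum_congr rfl fun A hA => ?_
      rw [mem_filter] at hA
      rw [hA.2, Nat.choose_symm hkn]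
    rw [h1, h2]
    have d1 := T_dual φ (k - 1) (by omega : k - 1 ≤ n)
    have d2 := T_dual φ k hkn
    rw [show n - (k - 1) = n - k + 1 from by omega] at d1
    have e1 : (∑ A ∈ (Finset.univ : Finset (Fin n)).powerset.filter
          (fun A => A.card = n - k + 1), φ A) = (n.choose (k - 1) : ℚ) - T (k - 1) := by
      rw [hT]; dsimp only; linarith [d1]
    have e2 : (∑ A ∈ (Finset.univ : Finset (Fin n)).powerset.filter
          (fun A => A.card = n - k), φ A) = (n.choose k : ℚ) - T k := by
      rw [hT]; dsimp only; linarith [d2]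
    rw [e1, e2]
    field_simp
    ring
  rw [hsig]
  have hTk := T_eq ψ k hkn
  have hTk1 := T_eq ψ (k - 1) (by omega : k - 1 ≤ n)
  rw [show k - 1 + 1 = k from by omega] at hTk1
  have hTk' : T k = ∑ j ∈ Finset.range (k + 1), ((n - j).choose (k - j) : ℚ) * dk ψ j := hTk
  have hTk1' : T (k - 1)
      = ∑ j ∈ Finset.range k, ((n - j).choose (k - 1 - j) : ℚ) * dk ψ j := hTk1
  rw [hTk', hTk1']
  -- Step 2: rewrite each fraction
  have s1 : (∑ j ∈ Finset.range (k + 1), ((n - j).choose (k - j) : ℚ) * dk ψ j)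
        / (n.choose k : ℚ)
      = ∑ j ∈ Finset.range (k + 1), ((k.choose j : ℚ) / (n.choose j : ℚ)) * dk ψ j := by
    rw [Finset.sum_div]
    refine Finset.sum_congr rfl fun j hj => ?_
    rw [Finset.mem_range, Nat.lt_succ_iff] at hj
    have hb : (n.choose k : ℚ) * (k.choose j : ℚ)
        = (n.choose j : ℚ) * ((n - j).choose (k - j) : ℚ) := by
      exact_mod_cast congrArg (fun x : ℕ => (x : ℚ)) (Nat.choose_mul (n := n) hj)
    have hj' := hcj j (hj.trans hkn)
    field_simp
    linear_combination -(dk ψ j) * hb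
  have s2 : (∑ j ∈ Finset.range k, ((n - j).choose (k - 1 - j) : ℚ) * dk ψ j)
        / (n.choose (k - 1) : ℚ)
      = ∑ j ∈ Finset.range (k + 1), (((k - 1).choose j : ℚ) / (n.choose j : ℚ)) * dk ψ j := by
    rw [Finset.sum_div, Finset.sum_range_succ]
    rw [Nat.choose_eq_zero_of_lt (show k - 1 < k from by omega)]
    rw [show ((0 : ℕ) : ℚ) = 0 from rfl, zero_div, zero_mul, add_zero]
    refine Finset.sum_congr rfl fun j hj => ?_
    rw [Finset.mem_range] at hj
    have hjk1 : j ≤ k - 1 := by omega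
    have hb : (n.choose (k - 1) : ℚ) * ((k - 1).choose j : ℚ)
        = (n.choose j : ℚ) * ((n - j).choose (k - 1 - j) : ℚ) := by
      exact_mod_cast congrArg (fun x : ℕ => (x : ℚ))
        (Nat.choose_mul (n := n) hjk1)
    have hj' := hcj j (by omega)
    field_simp
    linear_combination -(dk ψ j) * hb
  rw [s1, s2, ← Finset.sum_sub_distrib]
  -- Step 3: split off j = 0 and identify coefficients
  rw [Finset.range_eq_Ico, Finset.sum_eq_sum_Ico_succ_bot (by omega : 0 < k + 1)]
  rw [show Finset.Ico 1 (k + 1) = Finset.Icc 1 k from (Finset.Ico_add_one_right_eq_Icc 1 k)]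
  have h0 : (k.choose 0 : ℚ) / (n.choose 0 : ℚ) * dk ψ 0
      - ((k - 1).choose 0 : ℚ) / (n.choose 0 : ℚ) * dk ψ 0 = 0 := by
    simp
  rw [h0, zero_add]
  refine Finset.sum_congr rfl fun j hj => ?_
  rw [Finset.mem_Icc] at hj
  obtain ⟨b, rfl⟩ : ∃ b, j = b + 1 := ⟨j - 1, by omega⟩
  obtain ⟨a, rfl⟩ : ∃ a, k = a + 1 := ⟨k - 1, by omega⟩
  simp only [Nat.add_sub_cancel]
  rw [Nat.choose_succ_succ a b]
  push_cast
  ring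
end

section
/- Let φ be the structure function of a semicoherent system on n ≥ 2 components with structural signature (s₁,…,s_n). Then (as equalities of rational numbers): α₁ = n·s_n, β₁ = n·s₁, α₂ = C(n·s_n, 2) + C(n,2)·(s_{n−1} − s_n), and β₂ = C(n·s₁, 2) + C(n,2)·(s₂ − s₁), where n·s_n and n·s₁ are nonnegative integers and C(m,2) = m(m−1)/2. -/
open Finset

/-- count of sets of size c with φ = 1 -/
def Ncnt {n : ℕ} (φ : Finset (Fin n) → ℚ) (c : ℕ) : ℕ :=
  ((Finset.univ : Finset (Fin n)).powerset.filter (fun A => A.card = c ∧ φ A = 1)).card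

lemma sum_div_eq {n : ℕ} (φ : Finset (Fin n) → ℚ) (h01 : ∀ A, φ A = 0 ∨ φ A = 1) (c : ℕ) :
    (∑ A ∈ (Finset.univ : Finset (Fin n)).powerset.filter (fun A => A.card = c),
      φ A / (n.choose A.card : ℚ)) = (Ncnt φ c : ℚ) / (n.choose c : ℚ) := by
  have h1 : (∑ A ∈ (Finset.univ : Finset (Fin n)).powerset.filter (fun A => A.card = c),
      φ A / (n.choose A.card : ℚ)) =
      (∑ A ∈ (Finset.univ : Finset (Fin n)).powerset.filter (fun A => A.card = c),
      φ A) / (n.choose c : ℚ) := by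
    rw [Finset.sum_div]
    refine Finset.sum_congr rfl (fun A hA => ?_)
    simp only [mem_filter] at hA
    rw [hA.2]
  rw [h1]
  congr 1
  have : (∑ A ∈ (Finset.univ : Finset (Fin n)).powerset.filter (fun A => A.card = c),
      φ A) = ∑ A ∈ (Finset.univ : Finset (Fin n)).powerset.filter (fun A => A.card = c),
      (if φ A = 1 then (1:ℚ) else 0) := by
    refine Finset.sum_congr rfl (fun A _ => ?_)
    rcases h01 A with h | h <;> simp [h]
  rw [this, Finset.sum_boole, Ncnt, Finset.filter_filter]

lemma sig_eq_N {n : ℕ} (φ : Finset (Fin n) → ℚ) (h01 : ∀ A, φ A = 0 ∨ φ A = 1) (k : ℕ) :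
    sig φ k = (Ncnt φ (n - k + 1) : ℚ) / (n.choose (n - k + 1) : ℚ)
      - (Ncnt φ (n - k) : ℚ) / (n.choose (n - k) : ℚ) := by
  rw [sig, sum_div_eq φ h01, sum_div_eq φ h01]

lemma Ncnt_zero {n : ℕ} (φ : Finset (Fin n) → ℚ) (hempty : φ ∅ = 0) : Ncnt φ 0 = 0 := by
  rw [Ncnt, Finset.card_eq_zero]
  ext A
  simp only [mem_filter, Finset.card_eq_zero, notMem_empty, iff_false, not_and, and_imp]
  rintro _ rfl h
  rw [hempty] at h
  norm_num at h

lemma Ncnt_top {n : ℕ} (φ : Finset (Fin n) → ℚ) (hfull : φ Finset.univ = 1) : Ncnt φ n = 1 := by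
  rw [Ncnt, Finset.card_eq_one]
  refine ⟨Finset.univ, ?_⟩
  ext A
  simp only [mem_filter, mem_powerset, mem_singleton]
  constructor
  · rintro ⟨-, hc, -⟩
    exact Finset.card_eq_iff_eq_univ A |>.mp (by simpa using hc)
  · rintro rfl
    exact ⟨Finset.Subset.refl _, by simp, hfull⟩

lemma Ncnt_one {n : ℕ} (φ : Finset (Fin n) → ℚ) :
    Ncnt φ 1 = ((Finset.univ : Finset (Fin n)).filter (fun i => φ {i} = 1)).card := by
  rw [Ncnt]
  rw [show ((Finset.univ : Finset (Fin n)).powerset.filter (fun A => A.card = 1 ∧ φ A = 1))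
      = ((Finset.univ : Finset (Fin n)).filter (fun i => φ {i} = 1)).image
          (fun i => ({i} : Finset (Fin n))) from ?_]
  · rw [Finset.card_image_of_injective _ Finset.singleton_injective]
  · ext A
    simp only [mem_filter, mem_powerset, mem_image, mem_univ, true_and]
    constructor
    · rintro ⟨-, hc, h1⟩
      obtain ⟨i, rfl⟩ := Finset.card_eq_one.mp hc
      exact ⟨i, h1, rfl⟩
    · rintro ⟨i, h1, rfl⟩
      exact ⟨Finset.subset_univ _, Finset.card_singleton i, h1⟩

lemma Ncnt_compl {n : ℕ} (φ : Finset (Fin n) → ℚ) (c : ℕ) (hc : c ≤ n) :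
    ((Finset.univ : Finset (Fin n)).powerset.filter (fun A => A.card = c ∧ φ Aᶜ = 1)).card
      = Ncnt φ (n - c) := by
  rw [Ncnt]
  apply Finset.card_nbij' (fun A => Aᶜ) (fun A => Aᶜ)
  · intro A hA
    simp only [Finset.mem_coe, mem_filter, mem_powerset] at hA ⊢
    refine ⟨Finset.subset_univ _, ?_, hA.2.2⟩
    rw [Finset.card_compl, hA.2.1]
    simp
  · intro A hA
    simp only [Finset.mem_coe, mem_filter, mem_powerset] at hA ⊢
    refine ⟨Finset.subset_univ _, ?_, by rw [compl_compl]; exact hA.2.2⟩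
    rw [Finset.card_compl, hA.2.1]
    simp
    omega
  · intro A _; simp
  · intro A _; simp

lemma phi_one_of_mem {n : ℕ} (φ : Finset (Fin n) → ℚ) (h01 : ∀ A, φ A = 0 ∨ φ A = 1)
    (hmono : ∀ A B : Finset (Fin n), A ⊆ B → φ A ≤ φ B)
    {A : Finset (Fin n)} {i : Fin n} (hi : i ∈ A) (h1 : φ {i} = 1) : φ A = 1 := by
  have := hmono {i} A (Finset.singleton_subset_iff.mpr hi)
  rcases h01 A with h | h
  · rw [h1, h] at this; linarith
  · exact h

lemma alpha_one_eq {n : ℕ} (φ : Finset (Fin n) → ℚ) (hempty : φ ∅ = 0) :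
    alpha φ 1 = Ncnt φ 1 := by
  rw [alpha, Ncnt]
  congr 1
  apply Finset.filter_congr
  intro A _
  constructor
  · rintro ⟨hc, h1, -⟩; exact ⟨hc, h1⟩
  · rintro ⟨hc, h1⟩
    refine ⟨hc, h1, fun A' hA' => ?_⟩
    have : A'.card = 0 := by
      have := Finset.card_lt_card hA'
      omega
    rw [Finset.card_eq_zero.mp this, hempty]

lemma pair_count {n : ℕ} (φ : Finset (Fin n) → ℚ) (h01 : ∀ A, φ A = 0 ∨ φ A = 1)
    (hmono : ∀ A B : Finset (Fin n), A ⊆ B → φ A ≤ φ B) (hempty : φ ∅ = 0) :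
    Ncnt φ 2 = alpha φ 2 + (n.choose 2 - (n - Ncnt φ 1).choose 2) := by
  classical
  set S := (Finset.univ : Finset (Fin n)).filter (fun i => φ {i} = 1) with hS
  have hScard : Ncnt φ 1 = S.card := Ncnt_one φ
  -- alpha 2 characterization
  have halpha : alpha φ 2 = ((Finset.univ : Finset (Fin n)).powerset.filter
      (fun A => (A.card = 2 ∧ φ A = 1) ∧ A ⊆ Sᶜ)).card := by
    rw [alpha]
    congr 1
    apply Finset.filter_congr
    intro A _
    constructor
    · rintro ⟨hc, h1, hmin⟩
      refine ⟨⟨hc, h1⟩, fun i hi => ?_⟩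
      rw [Finset.mem_compl, hS, Finset.mem_filter]
      rintro ⟨-, hφi⟩
      have hsub : ({i} : Finset (Fin n)) ⊂ A := by
        refine Finset.ssubset_iff_subset_ne.mpr ⟨Finset.singleton_subset_iff.mpr hi, ?_⟩
        intro h
        rw [← h] at hc
        simp at hc
      have := hmin _ hsub
      rw [this] at hφi
      norm_num at hφi
    · rintro ⟨⟨hc, h1⟩, hsub⟩
      refine ⟨hc, h1, fun A' hA' => ?_⟩
      have hlt : A'.card < 2 := hc ▸ Finset.card_lt_card hA'
      interval_cases h : A'.card
      · rw [Finset.card_eq_zero.mp h, hempty]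
      · obtain ⟨i, rfl⟩ := Finset.card_eq_one.mp h
        have hiA : i ∈ A := hA'.1 (Finset.mem_singleton_self i)
        have : i ∈ Sᶜ := hsub hiA
        rw [Finset.mem_compl, hS, Finset.mem_filter] at this
        rcases h01 {i} with h' | h'
        · exact h'
        · exact absurd ⟨Finset.mem_univ i, h'⟩ this
  -- split the φ = 1 pairs
  set T := (Finset.univ : Finset (Fin n)).powerset.filter (fun A => A.card = 2 ∧ φ A = 1)
    with hT
  have hsplit := Finset.card_filter_add_card_filter_not
    (s := T) (p := fun A => A ⊆ Sᶜ)
  have hQ1 : T.filter (fun A => A ⊆ Sᶜ) = (Finset.univ : Finset (Fin n)).powerset.filter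
      (fun A => (A.card = 2 ∧ φ A = 1) ∧ A ⊆ Sᶜ) := by
    rw [hT, Finset.filter_filter]
  -- pairs not ⊆ Sᶜ automatically have φ = 1
  have hforce : ∀ A : Finset (Fin n), ¬ A ⊆ Sᶜ → φ A = 1 := by
    intro A hA
    obtain ⟨i, hiA, hiS⟩ := Finset.not_subset.mp hA
    rw [Finset.mem_compl, not_not, hS, Finset.mem_filter] at hiS
    exact phi_one_of_mem φ h01 hmono hiA hiS.2
  set P := (Finset.univ : Finset (Fin n)).powerset.filter (fun A => A.card = 2) with hP
  have hQ2 : T.filter (fun A => ¬ A ⊆ Sᶜ) = P.filter (fun A => ¬ A ⊆ Sᶜ) := by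
    rw [hT, hP, Finset.filter_filter, Finset.filter_filter]
    apply Finset.filter_congr
    intro A _
    constructor
    · rintro ⟨⟨hc, -⟩, hns⟩; exact ⟨hc, hns⟩
    · rintro ⟨hc, hns⟩; exact ⟨⟨hc, hforce A hns⟩, hns⟩
  have hPsplit := Finset.card_filter_add_card_filter_not
    (s := P) (p := fun A => A ⊆ Sᶜ)
  have hPcard : P.card = n.choose 2 := by
    rw [hP, ← Finset.powersetCard_eq_filter, Finset.card_powersetCard, Finset.card_univ,
      Fintype.card_fin]
  have hPsub : (P.filter (fun A => A ⊆ Sᶜ)).card = (n - S.card).choose 2 := by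
    have : P.filter (fun A => A ⊆ Sᶜ) = Finset.powersetCard 2 Sᶜ := by
      rw [hP, Finset.filter_filter]
      ext A
      simp only [Finset.mem_filter, Finset.mem_powerset, Finset.mem_powersetCard,
        Finset.subset_univ, true_and]
      tauto
    rw [this, Finset.card_powersetCard, Finset.card_compl, Fintype.card_fin]
  have hN2 : Ncnt φ 2 = T.card := by rw [Ncnt, hT]
  rw [hN2, ← hsplit, hQ1, ← halpha, hQ2, hScard]
  omega

lemma alpha_main {n : ℕ} (hn : 2 ≤ n) (φ : Finset (Fin n) → ℚ)
    (h01 : ∀ A, φ A = 0 ∨ φ A = 1)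
    (hmono : ∀ A B : Finset (Fin n), A ⊆ B → φ A ≤ φ B)
    (hempty : φ ∅ = 0) (hfull : φ Finset.univ = 1) :
    (n : ℚ) * sig φ n = (alpha φ 1 : ℚ) ∧
    (alpha φ 2 : ℚ) = ((n : ℚ) * sig φ n) * ((n : ℚ) * sig φ n - 1) / 2
        + (n.choose 2 : ℚ) * (sig φ (n - 1) - sig φ n) := by
  have hn0 : (n : ℚ) ≠ 0 := by
    simp only [ne_eq, Nat.cast_eq_zero]; omega
  have ha_le : Ncnt φ 1 ≤ n := by
    rw [Ncnt_one]
    exact le_trans (Finset.card_filter_le _ _) (by simp)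
  have hsn : sig φ n = (Ncnt φ 1 : ℚ) / n := by
    rw [sig_eq_N φ h01, Nat.sub_self, Ncnt_zero φ hempty]
    simp
  have hsn1 : sig φ (n - 1) = (Ncnt φ 2 : ℚ) / (n.choose 2 : ℚ) - (Ncnt φ 1 : ℚ) / n := by
    rw [sig_eq_N φ h01, show n - (n-1) = 1 by omega]
    norm_num
  have hone : (n : ℚ) * sig φ n = (alpha φ 1 : ℚ) := by
    rw [hsn, alpha_one_eq φ hempty]
    field_simp
  refine ⟨hone, ?_⟩
  have hc2 : (n.choose 2 : ℚ) ≠ 0 := by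
    simp only [ne_eq, Nat.cast_eq_zero]
    exact Nat.choose_pos hn |>.ne'
  have hkey := pair_count φ h01 hmono hempty
  have hle2 : (n - Ncnt φ 1).choose 2 ≤ n.choose 2 := Nat.choose_le_choose 2 (by omega)
  -- cast the key identity
  have hkeyQ : (Ncnt φ 2 : ℚ) = (alpha φ 2 : ℚ) + (n.choose 2 : ℚ) - ((n - Ncnt φ 1).choose 2 : ℚ) := by
    rw [hkey]
    push_cast [Nat.cast_sub hle2]
    ring
  have hsubcast : ((n - Ncnt φ 1 : ℕ) : ℚ) = (n : ℚ) - (Ncnt φ 1 : ℚ) := by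
    push_cast [Nat.cast_sub ha_le]
    ring
  have hA2 : (alpha φ 2 : ℚ) = (Ncnt φ 2 : ℚ) - (n.choose 2 : ℚ)
      + ((n - Ncnt φ 1).choose 2 : ℚ) := by linarith [hkeyQ]
  have hn1 : (n : ℚ) - 1 ≠ 0 := by
    have h2 : (2:ℚ) ≤ (n:ℚ) := by exact_mod_cast hn
    linarith
  rw [hA2, hsn, hsn1, Nat.cast_choose_two (K := ℚ) (n - Ncnt φ 1), hsubcast,
    Nat.cast_choose_two (K := ℚ) n]
  field_simp
  ring

lemma Ncnt_le {n : ℕ} (φ : Finset (Fin n) → ℚ) (c : ℕ) : Ncnt φ c ≤ n.choose c := by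
  rw [Ncnt]
  calc ((Finset.univ : Finset (Fin n)).powerset.filter (fun A => A.card = c ∧ φ A = 1)).card
      ≤ ((Finset.univ : Finset (Fin n)).powerset.filter (fun A => A.card = c)).card := by
        apply Finset.card_le_card
        intro A hA
        simp only [Finset.mem_filter] at hA ⊢
        exact ⟨hA.1, hA.2.1⟩
    _ = n.choose c := by
        rw [← Finset.powersetCard_eq_filter, Finset.card_powersetCard, Finset.card_univ,
          Fintype.card_fin]

lemma Ncnt_dual {n : ℕ} (φ : Finset (Fin n) → ℚ) (h01 : ∀ A, φ A = 0 ∨ φ A = 1)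
    (c : ℕ) (hc : c ≤ n) :
    Ncnt (fun A => 1 - φ Aᶜ) c = n.choose c - Ncnt φ (n - c) := by
  have hsplit := Finset.card_filter_add_card_filter_not
    (s := (Finset.univ : Finset (Fin n)).powerset.filter (fun A => A.card = c))
    (p := fun A => φ Aᶜ = 1)
  have h1 : ((Finset.univ : Finset (Fin n)).powerset.filter (fun A => A.card = c)).filter
      (fun A => φ Aᶜ = 1) = (Finset.univ : Finset (Fin n)).powerset.filter
      (fun A => A.card = c ∧ φ Aᶜ = 1) := by rw [Finset.filter_filter]
  have h2 : ((Finset.univ : Finset (Fin n)).powerset.filter (fun A => A.card = c)).filter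
      (fun A => ¬ φ Aᶜ = 1) = (Finset.univ : Finset (Fin n)).powerset.filter
      (fun A => A.card = c ∧ (fun A => 1 - φ Aᶜ) A = 1) := by
    rw [Finset.filter_filter]
    apply Finset.filter_congr
    intro A _
    simp only
    constructor
    · rintro ⟨hc', hne⟩
      rcases h01 Aᶜ with h | h
      · rw [h]; exact ⟨hc', by norm_num⟩
      · exact absurd h hne
    · rintro ⟨hc', he⟩
      refine ⟨hc', fun h => ?_⟩
      rw [h] at he
      norm_num at he
  have h3 : ((Finset.univ : Finset (Fin n)).powerset.filter (fun A => A.card = c)).card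
      = n.choose c := by
    rw [← Finset.powersetCard_eq_filter, Finset.card_powersetCard, Finset.card_univ,
      Fintype.card_fin]
  rw [h1, h2, h3] at hsplit
  rw [Ncnt_compl φ c hc] at hsplit
  rw [Ncnt]
  beta_reduce at hsplit ⊢
  omega

lemma dual_h01 {n : ℕ} (φ : Finset (Fin n) → ℚ) (h01 : ∀ A, φ A = 0 ∨ φ A = 1) :
    ∀ A : Finset (Fin n), (fun A => 1 - φ Aᶜ) A = 0 ∨ (fun A => 1 - φ Aᶜ) A = 1 := by
  intro A
  rcases h01 Aᶜ with h | h
  · right; simp only []; rw [h]; norm_num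
  · left; simp only []; rw [h]; norm_num

lemma beta_eq_alpha {n : ℕ} (φ : Finset (Fin n) → ℚ) (k : ℕ) :
    beta φ k = alpha (fun A => 1 - φ Aᶜ) k := by
  rw [beta, alpha]
  congr 1
  apply Finset.filter_congr
  intro A _
  beta_reduce
  constructor
  · rintro ⟨hc, h0, hmin⟩
    refine ⟨hc, by rw [h0]; norm_num, fun A' hA' => ?_⟩
    rw [hmin A' hA']
    norm_num
  · rintro ⟨hc, h1, hmin⟩
    refine ⟨hc, by linarith, fun A' hA' => ?_⟩
    have := hmin A' hA'
    linarith

lemma sig_dual_n {n : ℕ} (hn : 2 ≤ n) (φ : Finset (Fin n) → ℚ)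
    (h01 : ∀ A, φ A = 0 ∨ φ A = 1) (hfull : φ Finset.univ = 1) :
    sig (fun A => 1 - φ Aᶜ) n = sig φ 1 := by
  have hψ01 := dual_h01 φ h01
  rw [sig_eq_N _ hψ01, sig_eq_N _ h01, Nat.sub_self]
  have e1 : n - 1 + 1 = n := by omega
  rw [e1]
  have hψ0 : Ncnt (fun A => 1 - φ Aᶜ) 0 = 0 := by
    apply Ncnt_zero
    simp [hfull]
  have hψ1 : Ncnt (fun A => 1 - φ Aᶜ) 1 = n - Ncnt φ (n - 1) := by
    rw [Ncnt_dual φ h01 1 (by omega), Nat.choose_one_right]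
  have hφn : Ncnt φ n = 1 := Ncnt_top φ hfull
  rw [hψ0, hψ1, hφn]
  have hch : n.choose (n - 1) = n := by
    rw [← Nat.choose_symm (by omega : n - 1 ≤ n), show n - (n-1) = 1 by omega,
      Nat.choose_one_right]
  have hle : Ncnt φ (n-1) ≤ n := by
    have := Ncnt_le φ (n-1)
    omega
  rw [hch, Nat.choose_zero_right, Nat.choose_self, Nat.choose_one_right]
  have hn0 : (n:ℚ) ≠ 0 := by
    simp only [ne_eq, Nat.cast_eq_zero]; omega
  push_cast [Nat.cast_sub hle]
  field_simp
  ring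

lemma sig_dual_n1 {n : ℕ} (hn : 2 ≤ n) (φ : Finset (Fin n) → ℚ)
    (h01 : ∀ A, φ A = 0 ∨ φ A = 1) :
    sig (fun A => 1 - φ Aᶜ) (n - 1) = sig φ 2 := by
  have hψ01 := dual_h01 φ h01
  rw [sig_eq_N _ hψ01, sig_eq_N _ h01, show n - (n-1) = 1 by omega,
    show n - 2 + 1 = n - 1 by omega]
  have hψ2 : Ncnt (fun A => 1 - φ Aᶜ) 2 = n.choose 2 - Ncnt φ (n - 2) := by
    rw [Ncnt_dual φ h01 2 hn]
  have hψ1 : Ncnt (fun A => 1 - φ Aᶜ) 1 = n - Ncnt φ (n - 1) := by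
    rw [Ncnt_dual φ h01 1 (by omega), Nat.choose_one_right]
  have hch1 : n.choose (n - 1) = n := by
    rw [← Nat.choose_symm (by omega : n - 1 ≤ n), show n - (n-1) = 1 by omega,
      Nat.choose_one_right]
  have hch2 : n.choose (n - 2) = n.choose 2 := by
    rw [← Nat.choose_symm (by omega : n - 2 ≤ n), show n - (n-2) = 2 by omega]
  have hle1 : Ncnt φ (n - 1) ≤ n := by have := Ncnt_le φ (n-1); omega
  have hle2 : Ncnt φ (n - 2) ≤ n.choose 2 := by have := Ncnt_le φ (n-2); omega
  have hn0 : (n:ℚ) ≠ 0 := by simp only [ne_eq, Nat.cast_eq_zero]; omega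
  have hc2 : (n.choose 2 : ℚ) ≠ 0 := by
    simp only [ne_eq, Nat.cast_eq_zero]
    exact (Nat.choose_pos hn).ne'
  rw [hψ2, hψ1, hch1, hch2, Nat.choose_one_right]
  push_cast [Nat.cast_sub hle1, Nat.cast_sub hle2]
  field_simp
  ring

/-- For `n ≥ 2`: `α₁ = n·s_n`, `β₁ = n·s₁`,
`α₂ = C(n·s_n, 2) + C(n,2)·(s_{n−1} − s_n)`, and `β₂ = C(n·s₁, 2) + C(n,2)·(s₂ − s₁)`,
where `n·s_n` and `n·s₁` are nonnegative integers and `C(m,2) = m(m−1)/2`. -/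
theorem small_min_path_cut_sets_from_signature
    (n : ℕ) (hn : 2 ≤ n)
    (φ : Finset (Fin n) → ℚ)
    (h01 : ∀ A, φ A = 0 ∨ φ A = 1)
    (hmono : ∀ A B : Finset (Fin n), A ⊆ B → φ A ≤ φ B)
    (hempty : φ ∅ = 0) (hfull : φ Finset.univ = 1) :
    (∃ m : ℕ, (n : ℚ) * sig φ n = m) ∧
    (∃ m : ℕ, (n : ℚ) * sig φ 1 = m) ∧
    (alpha φ 1 : ℚ) = (n : ℚ) * sig φ n ∧
    (beta φ 1 : ℚ) = (n : ℚ) * sig φ 1 ∧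
    (alpha φ 2 : ℚ) = ((n : ℚ) * sig φ n) * ((n : ℚ) * sig φ n - 1) / 2
        + (n.choose 2 : ℚ) * (sig φ (n - 1) - sig φ n) ∧
    (beta φ 2 : ℚ) = ((n : ℚ) * sig φ 1) * ((n : ℚ) * sig φ 1 - 1) / 2
        + (n.choose 2 : ℚ) * (sig φ 2 - sig φ 1) := by
  set ψ : Finset (Fin n) → ℚ := fun A => 1 - φ Aᶜ with hψdef
  have hψ01 : ∀ A, ψ A = 0 ∨ ψ A = 1 := dual_h01 φ h01
  have hψmono : ∀ A B : Finset (Fin n), A ⊆ B → ψ A ≤ ψ B := by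
    intro A B hAB
    have := hmono Bᶜ Aᶜ (Finset.compl_subset_compl.mpr hAB)
    simp only [hψdef]
    linarith
  have hψempty : ψ ∅ = 0 := by simp [hψdef, hfull]
  have hψfull : ψ Finset.univ = 1 := by simp [hψdef, hempty]
  obtain ⟨hA1, hA2⟩ := alpha_main hn φ h01 hmono hempty hfull
  obtain ⟨hB1, hB2⟩ := alpha_main hn ψ hψ01 hψmono hψempty hψfull
  have hd1 : sig ψ n = sig φ 1 := sig_dual_n hn φ h01 hfull
  have hd2 : sig ψ (n - 1) = sig φ 2 := sig_dual_n1 hn φ h01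
  rw [hd1] at hB1 hB2
  rw [hd2] at hB2
  refine ⟨⟨alpha φ 1, hA1⟩, ⟨alpha ψ 1, hB1⟩, hA1.symm, ?_, hA2, ?_⟩
  · rw [beta_eq_alpha]; exact hB1.symm
  · rw [beta_eq_alpha]; exact hB2
end
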